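/- arXiv:0905.3081 — 2 statements merged into one kernel-verified Lean document; each statement's English description precedes it below -/
import Mathlib

section
/- For every integer n ≥ 1 there exists a bijection between the set of Catalan tableaux of index n and the set of binary trees with n vertices. -/
/-- A binary tree: empty, or a root with a left and a right subtree. -/
inductive BinTree : Type
  | nil : BinTree
  | node : BinTree → BinTree → BinTree
  deriving DecidableEq

/-- Number of vertices of a binary tree. -/
def BinTree.size : BinTree → ℕ
  | .nil => 0
  | .node l r => l.size + r.size + 1

/-- Length (number of vertices) of the left branch. -/
def BinTree.leftBranchLen : BinTree → ℕ
  | .nil => 0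
  | .node l _ => l.leftBranchLen + 1

/-- Length (number of vertices) of the right branch. -/
def BinTree.rightBranchLen : BinTree → ℕ
  | .nil => 0
  | .node _ r => r.rightBranchLen + 1

/-- Word over {a,b} (a = `true`, b = `false`) reading the vertices in symmetric
(in-)order; a vertex contributes `true` iff it has a right child. -/
def BinTree.canopyFull : BinTree → List Bool
  | .nil => []
  | .node l r => l.canopyFull ++ (decide (r ≠ BinTree.nil)) :: r.canopyFull

/-- The canopy of a binary tree with `n` vertices: the word `u₁ … u_{n-1}` over
{a = `true`, b = `false`} with `uᵢ = a` iff the `i`-th vertex in symmetric order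
has a right child.  (The last vertex in symmetric order never has a right child,
so it is dropped.) -/
def BinTree.canopy (B : BinTree) : List Bool := B.canopyFull.dropLast

/-- A Catalan tableau of index `n`: a partition `λ₁ ≥ … ≥ λ_k` with `λ₁ = n - k`,
drawn right-justified inside the `k × (n-k)` rectangle (rows bottom to top, row `i`
having `lam i` cells, occupying columns `j` with `m - lam i ≤ j < m` where
`m = n - k`), filled with 0's (`false`) and 1's (`true`) such that every column
contains exactly one 1 and no 0 has both a 1 below it in its column and a 1 to
its right in its row.  Entries outside the diagram are forced to `false`. -/
structure CatalanTableau (n : ℕ) where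
  k : ℕ
  m : ℕ
  hk : 0 < k
  hkm : k + m = n
  lam : Fin k → ℕ
  lam_le : ∀ i, lam i ≤ m
  lam_first : lam ⟨0, hk⟩ = m
  lam_anti : ∀ i j : Fin k, i ≤ j → lam j ≤ lam i
  f : Fin k → Fin m → Bool
  f_outside : ∀ (i : Fin k) (j : Fin m), (j : ℕ) < m - lam i → f i j = false
  col_one : ∀ j : Fin m, ∃! i : Fin k, f i j = true
  no_bad : ∀ (i : Fin k) (j : Fin m), m - lam i ≤ (j : ℕ) → f i j = false →
    ¬ ((∃ i' : Fin k, i' < i ∧ f i' j = true) ∧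
       (∃ j' : Fin m, (j : ℕ) < (j' : ℕ) ∧ f i j' = true))

/-- The profile of a Catalan tableau: the NW border of its Ferrers diagram read
from the bottom-left corner of the rectangle to its top-right corner
(a = `true` for a north step, b = `false` for an east step), with the first
letter (always a north step) deleted. -/
def CatalanTableau.profile {n : ℕ} (T : CatalanTableau n) : List Bool :=
  ((List.finRange T.k).flatMap (fun i =>
    true :: List.replicate
      (T.lam i - (if h : (i : ℕ) + 1 < T.k then T.lam ⟨(i : ℕ) + 1, h⟩ else 0)) false)).tail

/-- Number of 1's in the first (bottom) row of a Catalan tableau. -/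
noncomputable def CatalanTableau.onesFirstRow {n : ℕ} (T : CatalanTableau n) : ℕ :=
  Nat.card {j : Fin T.m // T.f ⟨0, T.hk⟩ j = true}

/-- An entry is restricted if it is a 0 (in a cell of the diagram) lying above
some 1 in its column. -/
def CatalanTableau.Restricted {n : ℕ} (T : CatalanTableau n)
    (i : Fin T.k) (j : Fin T.m) : Prop :=
  T.m - T.lam i ≤ (j : ℕ) ∧ T.f i j = false ∧ ∃ i' : Fin T.k, i' < i ∧ T.f i' j = true

/-- Number of unrestricted rows (rows of the rectangle containing no restricted
entry). -/
noncomputable def CatalanTableau.unrestrictedRows {n : ℕ} (T : CatalanTableau n) : ℕ :=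
  Nat.card {i : Fin T.k // ∀ j : Fin T.m, ¬ T.Restricted i j}

/-- `weaklyBelow ω η`: the lattice paths coded by `ω`, `η` (a = `true` = north
step, b = `false` = east step, both starting at the origin) have the same
endpoints and `η` never passes strictly above `ω`. -/
def weaklyBelow (ω η : List Bool) : Prop :=
  η.length = ω.length ∧ η.count true = ω.count true ∧
    ∀ t : ℕ, (η.take t).count true ≤ (ω.take t).count true

/-- Heights at which the successive east steps of a path occur. -/
def eastHeightsAux : ℕ → List Bool → List ℕ
  | _, [] => []
  | h, true :: w => eastHeightsAux (h + 1) w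
  | h, false :: w => h :: eastHeightsAux h w

def eastHeights (w : List Bool) : List ℕ := eastHeightsAux 0 w

/-- Number of horizontal contacts of two paths: unit east edges traversed by
both paths. -/
def contacts (ω η : List Bool) : ℕ :=
  ((eastHeights ω).zip (eastHeights η)).countP (fun p => p.1 == p.2)

/-- Number of trailing north steps of a path. -/
def trailingNorth (w : List Bool) : ℕ := (w.reverse.takeWhile (· == true)).length

/-- Number of left edges, i.e. of vertices having a left child. -/
def BinTree.leftEdgeCount : BinTree → ℕ
  | .nil => 0
  | .node l r => l.leftEdgeCount + r.leftEdgeCount + (if l = BinTree.nil then 0 else 1)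

/-- Number of vertices having no right child. -/
def BinTree.noRightCount : BinTree → ℕ
  | .nil => 0
  | .node l r => l.noRightCount + r.noRightCount + (if r = BinTree.nil then 1 else 0)

/-- Symmetric-order traversal recording, for each vertex, whether it has a left
child, whether it has a right child, and its right height (the second argument
is the right height of the current root). -/
def BinTree.inorderAux : BinTree → ℕ → List (Bool × Bool × ℕ)
  | .nil, _ => []
  | .node l r, h =>
      BinTree.inorderAux l h ++
        (decide (l ≠ BinTree.nil), decide (r ≠ BinTree.nil), h) :: BinTree.inorderAux r (h + 1)

def BinTree.inorder (B : BinTree) : List (Bool × Bool × ℕ) := B.inorderAux 0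

/-- The sequence `ρ₁, …, ρ_m`: right heights of the parents of the left edges,
the left edges being ordered by their parents in symmetric order. -/
def BinTree.rhoList (B : BinTree) : List ℕ :=
  (B.inorder.filter (fun v => v.1)).map (fun v => v.2.2)

def hsAux : List (Bool × Bool × ℕ) → ℕ → List ℕ
  | [], _ => []
  | v :: rest, c => if v.2.1 then hsAux rest (c + 1) else c :: hsAux rest c

/-- The sequence `h₁, …, h_m`: for each vertex with no right child (in symmetric
order, excluding the last vertex in symmetric order), the number of vertices
preceding it in symmetric order that have a right child. -/
def BinTree.hList (B : BinTree) : List ℕ := (hsAux B.inorder 0).dropLast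

/-- Leaves of the completion `γ(B)` in symmetric order, each recorded as `true`
if it is a left child of its parent and `false` if it is a right child; the
boolean argument records whether the current subtree sits as a left child. -/
def BinTree.gammaLeavesAux : BinTree → Bool → List Bool
  | .nil, isLeft => [isLeft]
  | .node l r, _ => BinTree.gammaLeavesAux l true ++ BinTree.gammaLeavesAux r false

/-- The word of the leaves of the complete binary tree `γ(B)` in symmetric order
(a = `true` for a left child, b = `false` for a right child). -/
def BinTree.leafWord : BinTree → List Bool
  | .nil => []
  | .node l r => BinTree.gammaLeavesAux l true ++ BinTree.gammaLeavesAux r false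


namespace CTproof


def Rel (p q : ℕ × ℕ) : Prop := p.1 ≤ q.1 ∧ (q.2 ≤ p.2 ∨ p.1 < q.2)

structure Model where
  c : ℕ
  cols : List (ℕ × ℕ)

def Model.Ok (x : Model) : Prop :=
  (∀ p ∈ x.cols, p.2 ≤ p.1 ∧ p.1 ≤ x.c) ∧ x.cols.Pairwise Rel

def Model.size (x : Model) : ℕ := x.c + 1 + x.cols.length

def shiftCols (t : ℕ) (l : List (ℕ × ℕ)) : List (ℕ × ℕ) :=
  l.map (fun p => (p.1 + t, p.2 + t))

def unshiftCols (t : ℕ) (l : List (ℕ × ℕ)) : List (ℕ × ℕ) :=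
  l.map (fun p => (p.1 - t, p.2 - t))

def Phi : BinTree → Model
  | .nil => ⟨0, []⟩
  | .node L R =>
      ⟨(Phi L).c + (if R = BinTree.nil then 0 else (Phi R).c + 1),
       (Phi L).cols ++ (if L = BinTree.nil then [] else [((Phi L).c, 0)]) ++
         (if R = BinTree.nil then [] else shiftCols ((Phi L).c + 1) (Phi R).cols)⟩

lemma map_id_of_mem {α : Type*} (l : List α) (f : α → α) (h : ∀ p ∈ l, f p = p) :
    l.map f = l := by
  induction l with
  | nil => rfl
  | cons a t ih => simp only [List.map_cons, h a (by simp), ih (fun p hp => h p (by simp [hp]))]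

lemma shift_unshift (t : ℕ) (l : List (ℕ × ℕ)) (h : ∀ p ∈ l, t ≤ p.2 ∧ t ≤ p.1) :
    shiftCols t (unshiftCols t l) = l := by
  unfold shiftCols unshiftCols
  rw [List.map_map]
  refine map_id_of_mem _ _ (fun p hp => ?_)
  have := h p hp
  simp only [Function.comp_apply]
  ext <;> simp <;> omega

lemma shift_mem (t : ℕ) {l : List (ℕ × ℕ)} {q : ℕ × ℕ} (hq : q ∈ shiftCols t l) :
    t ≤ q.1 ∧ t ≤ q.2 ∧ ∃ p ∈ l, q = (p.1 + t, p.2 + t) := by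
  unfold shiftCols at hq
  obtain ⟨p, hp, rfl⟩ := List.mem_map.mp hq
  exact ⟨by simp, by simp, p, hp, rfl⟩

lemma shift_injective (t : ℕ) : Function.Injective (shiftCols t) := by
  intro l1 l2 h
  have : Function.Injective (fun p : ℕ × ℕ => (p.1 + t, p.2 + t)) := by
    intro p q hpq
    simp only [Prod.mk.injEq] at hpq
    ext <;> omega
  exact List.map_injective_iff.mpr this h

lemma rel_shift (t : ℕ) {p q : ℕ × ℕ} (h : Rel p q) :
    Rel (p.1 + t, p.2 + t) (q.1 + t, q.2 + t) := by
  obtain ⟨h1, h2 | h2⟩ := h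
  · exact ⟨by omega, Or.inl (by omega)⟩
  · exact ⟨by omega, Or.inr (by omega)⟩

lemma pairwise_shift {t : ℕ} {l : List (ℕ × ℕ)} (h : l.Pairwise Rel) :
    (shiftCols t l).Pairwise Rel := by
  unfold shiftCols
  rw [List.pairwise_map]
  exact h.imp (fun hr => rel_shift t hr)

lemma pairwise_unshift {t : ℕ} {l : List (ℕ × ℕ)}
    (hmem : ∀ p ∈ l, t ≤ p.2 ∧ t ≤ p.1) (h : l.Pairwise Rel) :
    (unshiftCols t l).Pairwise Rel := by
  unfold unshiftCols
  rw [List.pairwise_map]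
  refine (List.pairwise_iff_forall_sublist.mpr ?_)
  intro p q hsub
  have hp := hmem p (hsub.subset (by simp))
  have hq := hmem q (hsub.subset (by simp))
  have hr : Rel p q := List.pairwise_iff_forall_sublist.mp h hsub
  obtain ⟨h1, h2 | h2⟩ := hr
  · exact ⟨by omega, Or.inl (by omega)⟩
  · exact ⟨by omega, Or.inr (by omega)⟩

lemma Phi_ok : ∀ B : BinTree, (Phi B).Ok := by
  intro B
  induction B with
  | nil => exact ⟨by simp [Phi], by simp [Phi]⟩
  | node L R ihL ihR =>
    obtain ⟨eL, pL⟩ := ihL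
    obtain ⟨eR, pR⟩ := ihR
    set cL := (Phi L).c with hcL
    constructor
    · intro p hp
      simp only [Phi, List.mem_append] at hp
      rcases hp with (hp | hp) | hp
      · have := eL p hp
        constructor
        · exact this.1
        · simp only [Phi]; split <;> omega
      · rcases (by split at hp <;> simp_all : p = (cL, 0)) with rfl
        refine ⟨by simp, ?_⟩
        simp only [Phi]; split <;> omega
      · split at hp
        · simp at hp
        · obtain ⟨h1, h2, q, hq, rfl⟩ := shift_mem _ hp
          have := eR q hq
          simp only
          constructor
          · omega
          · simp only [Phi]; split
            · simp_all
            · omega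
    · simp only [Phi]
      rw [List.append_assoc, List.pairwise_append]
      refine ⟨pL, ?_, ?_⟩
      · rw [List.pairwise_append]
        refine ⟨by split <;> simp, ?_, ?_⟩
        · split
          · simp
          · exact pairwise_shift pR
        · intro a ha b hb
          split at ha
          · simp at ha
          · simp only [List.mem_singleton] at ha
            subst ha
            split at hb
            · simp at hb
            · obtain ⟨h1, h2, q, hq, rfl⟩ := shift_mem _ hb
              exact ⟨by simp; omega, Or.inr (by simp; omega)⟩
      · intro a ha b hb
        have haa := eL a ha
        rw [List.mem_append] at hb
        rcases hb with hb | hb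
        · rcases (by split at hb <;> simp_all : b = (cL, 0)) with rfl
          exact ⟨haa.2, Or.inl (by simp)⟩
        · split at hb
          · simp at hb
          · obtain ⟨h1, h2, q, hq, rfl⟩ := shift_mem _ hb
            exact ⟨by simp; omega, Or.inr (by simp; omega)⟩

lemma Phi_size : ∀ B : BinTree, B ≠ BinTree.nil → (Phi B).size = B.size := by
  intro B
  induction B with
  | nil => simp
  | node L R ihL ihR =>
    intro _
    simp only [Phi, Model.size, BinTree.size, List.length_append]
    by_cases hL : L = BinTree.nil <;> by_cases hR : R = BinTree.nil
    · subst hL; subst hR; simp [Phi, BinTree.size]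
    · subst hL
      have := ihR hR
      simp only [Model.size] at this
      simp [hR, Phi, BinTree.size, shiftCols]
      omega
    · subst hR
      have := ihL hL
      simp only [Model.size] at this
      simp [hL, BinTree.size]
      omega
    · have h1 := ihL hL
      have h2 := ihR hR
      simp only [Model.size] at h1 h2
      simp [hL, hR, BinTree.size, shiftCols]
      omega

lemma exists_last_zero_split (l : List (ℕ × ℕ)) (h : ∃ p ∈ l, p.2 = 0) :
    ∃ A a S, l = A ++ (a, 0) :: S ∧ ∀ q ∈ S, q.2 ≠ 0 := by
  induction l with
  | nil => simp at h
  | cons p t ih =>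
    by_cases ht : ∃ q ∈ t, q.2 = 0
    · obtain ⟨A, a, S, rfl, hS⟩ := ih ht
      exact ⟨p :: A, a, S, rfl, hS⟩
    · obtain ⟨q, hq, hq0⟩ := h
      push_neg at ht
      rcases List.mem_cons.mp hq with rfl | hmem
      · refine ⟨[], q.1, t, ?_, ht⟩
        simp [← hq0]
      · exact absurd hq0 (ht q hmem)

lemma last_zero_split_unique (A : List (ℕ × ℕ)) : ∀ (A' S S' : List (ℕ × ℕ)) (a a' : ℕ),
    (∀ q ∈ S, q.2 ≠ 0) → (∀ q ∈ S', q.2 ≠ 0) →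
    A ++ (a, 0) :: S = A' ++ (a', 0) :: S' → A = A' ∧ a = a' ∧ S = S' := by
  induction A with
  | nil =>
    intro A' S S' a a' hS hS' h
    cases A' with
    | nil => simpa using h
    | cons p' t' =>
      simp only [List.nil_append, List.cons_append, List.cons.injEq] at h
      exfalso
      have : (a', 0) ∈ S := by
        rw [h.2]
        simp
      exact hS _ this rfl
  | cons p t ih =>
    intro A' S S' a a' hS hS' h
    cases A' with
    | nil =>
      simp only [List.cons_append, List.nil_append, List.cons.injEq] at h
      exfalso
      have : (a, 0) ∈ S' := by
        rw [← h.2]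
        simp
      exact hS' _ this rfl
    | cons p' t' =>
      simp only [List.cons_append, List.cons.injEq] at h
      obtain ⟨h1, h2, h3⟩ := ih t' S S' a a' hS hS' h.2
      exact ⟨by rw [h.1, h1], h2, h3⟩

lemma shift_no_zero {t : ℕ} (ht : 1 ≤ t) {l : List (ℕ × ℕ)} {q : ℕ × ℕ}
    (hq : q ∈ shiftCols t l) : q.2 ≠ 0 := by
  obtain ⟨h1, h2, _⟩ := shift_mem _ hq
  omega

lemma Phi_cols_zero_iff : ∀ (X Y : BinTree),
    (∃ p ∈ (Phi (BinTree.node X Y)).cols, p.2 = 0) ↔ X ≠ BinTree.nil := by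
  intro X Y
  constructor
  · rintro ⟨p, hp, hp0⟩ rfl
    simp only [Phi, if_pos rfl, List.append_nil, List.nil_append] at hp
    by_cases hY : Y = BinTree.nil
    · simp [hY] at hp
    · rw [if_neg hY] at hp
      exact shift_no_zero (by omega) hp hp0
  · intro hX
    refine ⟨((Phi X).c, 0), ?_, rfl⟩
    simp only [Phi, List.mem_append, if_neg hX]
    left; right; simp

lemma Phi_inj : ∀ B1 : BinTree, B1 ≠ BinTree.nil → ∀ B2 : BinTree, B2 ≠ BinTree.nil →
    Phi B1 = Phi B2 → B1 = B2 := by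
  intro B1
  induction B1 with
  | nil => simp
  | node L R ihL ihR =>
    intro _ B2 hB2 h
    cases B2 with
    | nil => simp at hB2
    | node L' R' =>
      clear hB2
      have hc : (Phi (BinTree.node L R)).c = (Phi (BinTree.node L' R')).c := by rw [h]
      have hcols0 : (Phi (BinTree.node L R)).cols = (Phi (BinTree.node L' R')).cols := by rw [h]
      have hcols := hcols0
      simp only [Phi] at hc hcols
      have hLL' : (L = BinTree.nil) ↔ (L' = BinTree.nil) := by
        have hiff : (L ≠ BinTree.nil) ↔ (L' ≠ BinTree.nil) := by
          rw [← Phi_cols_zero_iff L R, ← Phi_cols_zero_iff L' R', hcols0]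
        exact not_iff_not.mp hiff
      by_cases hL : L = BinTree.nil
      · have hL' : L' = BinTree.nil := hLL'.mp hL
        subst hL; subst hL'
        simp only [Phi, if_pos rfl, List.nil_append] at hc hcols
        by_cases hR : R = BinTree.nil
        · by_cases hR' : R' = BinTree.nil
          · rw [hR, hR']
          · simp [if_pos hR, if_neg hR'] at hc
        · by_cases hR' : R' = BinTree.nil
          · simp [if_neg hR, if_pos hR'] at hc
          · simp only [if_neg hR, if_neg hR'] at hc hcols
            have h1 : (Phi R).c = (Phi R').c := by omega
            have h2 : (Phi R).cols = (Phi R').cols := shift_injective _ hcols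
            rw [ihR hR R' hR' (by cases hp : Phi R; cases hp' : Phi R'; simp_all)]
      · have hL' : ¬ L' = BinTree.nil := fun hh => hL (hLL'.mpr hh)
        simp only [if_neg hL, if_neg hL'] at hc hcols
        simp only [List.append_assoc, List.singleton_append] at hcols
        have hsplit := last_zero_split_unique (Phi L).cols (Phi L').cols _ _ _ _
          (fun q hq => by
            split at hq
            · simp at hq
            · exact shift_no_zero (by omega) hq)
          (fun q hq => by
            split at hq
            · simp at hq
            · exact shift_no_zero (by omega) hq) hcols
        obtain ⟨e1, e2, e3⟩ := hsplit
        have hLeq : L = L' := ihL hL L' hL'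
          (by cases hp : Phi L; cases hp' : Phi L'; simp_all)
        subst hLeq
        by_cases hR : R = BinTree.nil
        · by_cases hR' : R' = BinTree.nil
          · rw [hR, hR']
          · simp [if_pos hR, if_neg hR'] at hc
        · by_cases hR' : R' = BinTree.nil
          · simp [if_neg hR, if_pos hR'] at hc
          · simp only [if_neg hR, if_neg hR'] at hc e3
            have h1 : (Phi R).c = (Phi R').c := by omega
            have h2 : (Phi R).cols = (Phi R').cols := shift_injective _ e3
            rw [ihR hR R' hR' (by cases hp : Phi R; cases hp' : Phi R'; simp_all)]

lemma Phi_surj : ∀ n : ℕ, 1 ≤ n → ∀ x : Model, x.Ok → x.size = n →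
    ∃ B : BinTree, B ≠ BinTree.nil ∧ B.size = n ∧ Phi B = x := by
  intro n
  induction n using Nat.strong_induction_on with
  | _ n ih =>
    intro hn x hok hsize
    obtain ⟨c, cols⟩ := x
    obtain ⟨hent, hpw⟩ := hok
    simp only [Model.size] at hsize
    simp only at hent hpw
    by_cases hz : ∃ p ∈ cols, p.2 = 0
    · -- there is a column with ρ = 0 : L ≠ nil
      obtain ⟨A, a, S, rfl, hS⟩ := exists_last_zero_split cols hz
      have hsplitpw := List.pairwise_append.mp hpw
      have hconspw := List.pairwise_cons.mp hsplitpw.2.1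
      have hac : a ≤ c := (hent (a, 0) (by simp)).2
      have hSlb : ∀ q ∈ S, a + 1 ≤ q.2 ∧ a + 1 ≤ q.1 := by
        intro q hq
        have hrel : Rel (a, 0) q := hconspw.1 q hq
        have hq2 : q.2 ≠ 0 := hS q hq
        have hq21 : q.2 ≤ q.1 := (hent q (by simp [hq])).1
        rcases hrel.2 with h2 | h2
        · omega
        · simp at h2; omega
      -- left model
      have hAent : ∀ p ∈ A, p.2 ≤ p.1 ∧ p.1 ≤ a := by
        intro p hp
        have h1 := hent p (by simp [hp])
        have hrel : Rel p (a, 0) := hsplitpw.2.2 p hp (a, 0) (by simp)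
        exact ⟨h1.1, by simpa using hrel.1⟩
      have hApw : A.Pairwise Rel := hsplitpw.1
      have hsizeL : (Model.mk a A).size = a + 1 + A.length := rfl
      have hLlt : a + 1 + A.length < n := by
        simp only [List.length_append, List.length_cons] at hsize
        omega
      obtain ⟨L, hLnil, hLsize, hLPhi⟩ := ih (a + 1 + A.length) hLlt (by omega)
        (Model.mk a A) ⟨hAent, hApw⟩ rfl
      by_cases hrest : S = [] ∧ c = a
      · -- R = nil
        obtain ⟨rfl, rfl⟩ := hrest
        refine ⟨BinTree.node L BinTree.nil, by simp, ?_, ?_⟩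
        · simp only [BinTree.size, hLsize]
          simp only [List.length_append, List.length_cons, List.length_nil] at hsize
          omega
        · simp only [Phi, if_pos rfl, if_neg hLnil, hLPhi, List.append_nil]
          rw [Model.mk.injEq]
          exact ⟨by simp, by simp⟩
      · have hac' : a < c := by
          rcases (not_and_or.mp hrest) with hS0 | hca
          · obtain ⟨q, hq⟩ := List.exists_mem_of_ne_nil S hS0
            have := hSlb q hq
            have := (hent q (by simp [hq])).2
            omega
          · omega
        have hRent : ∀ p ∈ unshiftCols (a + 1) S, p.2 ≤ p.1 ∧ p.1 ≤ c - a - 1 := by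
          intro p hp
          obtain ⟨q, hq, rfl⟩ := List.mem_map.mp hp
          have h1 := hent q (by simp [hq])
          have h2 := hSlb q hq
          constructor <;> simp <;> omega
        have hRpw : (unshiftCols (a + 1) S).Pairwise Rel := by
          exact pairwise_unshift (fun q hq => ⟨(hSlb q hq).1, (hSlb q hq).2⟩) hconspw.2
        have hsizeR : (Model.mk (c - a - 1) (unshiftCols (a + 1) S)).size
            = c - a + S.length := by
          simp only [Model.size, unshiftCols, List.length_map]
          omega
        have hRlt : c - a + S.length < n := by
          simp only [List.length_append, List.length_cons] at hsize
          omega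
        obtain ⟨R, hRnil, hRsize, hRPhi⟩ := ih (c - a + S.length) hRlt (by omega)
          (Model.mk (c - a - 1) (unshiftCols (a + 1) S)) ⟨hRent, hRpw⟩ hsizeR
        refine ⟨BinTree.node L R, by simp, ?_, ?_⟩
        · simp only [BinTree.size, hLsize, hRsize]
          simp only [List.length_append, List.length_cons] at hsize
          omega
        · simp only [Phi, if_neg hLnil, if_neg hRnil, hLPhi, hRPhi]
          have hsu : shiftCols (a + 1) (unshiftCols (a + 1) S) = S :=
            shift_unshift _ _ (fun q hq => ⟨(hSlb q hq).1, (hSlb q hq).2⟩)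
          rw [Model.mk.injEq]
          refine ⟨by omega, by rw [hsu]; simp⟩
    · -- no zero column : L = nil
      push_neg at hz
      by_cases hcols : cols = []
      · subst hcols
        rcases Nat.eq_zero_or_pos c with rfl | hc
        · have hn1 : n = 1 := by simpa using hsize.symm
          exact ⟨BinTree.node BinTree.nil BinTree.nil, by simp, by simp [BinTree.size]; omega,
            by simp [Phi]⟩
        · have hn : n = c + 1 := by simpa using hsize.symm
          obtain ⟨R, hRnil, hRsize, hRPhi⟩ := ih (n - 1) (by omega) (by omega)
            (Model.mk (c - 1) []) ⟨by simp, by simp⟩ (by simp [Model.size]; omega)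
          refine ⟨BinTree.node BinTree.nil R, by simp, ?_, ?_⟩
          · simp [BinTree.size, hRsize]; omega
          · have hn' : n - 1 = c - 1 + 1 + 0 := by simp at hsize; omega
            simp only [Phi, if_pos rfl, if_neg hRnil, hRPhi, List.nil_append]
            rw [Model.mk.injEq]
            refine ⟨by simpa using by omega, by simp [shiftCols]⟩
      · have hlb : ∀ q ∈ cols, 1 ≤ q.2 ∧ 1 ≤ q.1 := by
          intro q hq
          have h1 := (hent q hq).1
          have h2 := hz q hq
          omega
        have hc1 : 1 ≤ c := by
          obtain ⟨q, hq⟩ := List.exists_mem_of_ne_nil cols hcols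
          have := (hent q hq).2
          have := hlb q hq
          omega
        obtain ⟨R, hRnil, hRsize, hRPhi⟩ := ih (n - 1) (by omega) (by omega)
          (Model.mk (c - 1) (unshiftCols 1 cols))
          ⟨by
            intro p hp
            obtain ⟨q, hq, rfl⟩ := List.mem_map.mp hp
            have h1 := hent q hq
            have h2 := hlb q hq
            constructor <;> simp <;> omega,
           pairwise_unshift hlb hpw⟩
          (by simp only [Model.size, unshiftCols, List.length_map]; omega)
        refine ⟨BinTree.node BinTree.nil R, by simp, ?_, ?_⟩
        · simp [BinTree.size, hRsize]; omega
        · simp only [Phi, if_pos rfl, if_neg hRnil, hRPhi, List.nil_append]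
          have hsu : shiftCols 1 (unshiftCols 1 cols) = cols :=
            shift_unshift _ _ (fun q hq => ⟨(hlb q hq).1, (hlb q hq).2⟩)
          rw [Model.mk.injEq]
          constructor
          · omega
          · show shiftCols (0 + 1) (unshiftCols 1 cols) = cols
            rw [Nat.zero_add, hsu]


/-! ### Counting helpers on `Fin` -/

lemma card_filter_le_val (k a : ℕ) :
    ((Finset.univ : Finset (Fin k)).filter (fun i : Fin k => a ≤ (i : ℕ))).card = k - a := by
  rw [← Nat.card_Ico a k]
  refine Finset.card_nbij (fun i : Fin k => (i : ℕ)) ?_ ?_ ?_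
  · intro i hi
    simp only [Finset.mem_coe, Finset.mem_filter, Finset.mem_univ, true_and] at hi
    simp [Finset.mem_Ico, hi, i.isLt]
  · intro i hi j hj hij
    exact Fin.val_injective hij
  · intro j hj
    simp only [Finset.coe_Ico, Set.mem_Ico] at hj
    exact ⟨⟨j, hj.2⟩, by simp [hj.1], rfl⟩

lemma card_filter_lt_val (k a : ℕ) :
    ((Finset.univ : Finset (Fin k)).filter (fun i : Fin k => (i : ℕ) < a)).card = min a k := by
  have h := Finset.card_filter_add_card_filter_not
    (s := (Finset.univ : Finset (Fin k))) (p := fun i => a ≤ (i : ℕ))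
  have h2 : ((Finset.univ : Finset (Fin k)).filter (fun i : Fin k => ¬ a ≤ (i : ℕ)))
      = (Finset.univ : Finset (Fin k)).filter (fun i : Fin k => (i : ℕ) < a) := by
    apply Finset.filter_congr
    intro i _
    simp [not_le]
  rw [card_filter_le_val, h2] at h
  simp only [Finset.card_univ, Fintype.card_fin] at h
  omega

lemma card_filter_le_val' (k a : ℕ) :
    ((Finset.univ : Finset (Fin k)).filter (fun i : Fin k => (i : ℕ) ≤ a)).card = min (a + 1) k := by
  rw [← card_filter_lt_val k (a + 1)]
  congr 1
  apply Finset.filter_congr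
  intro i _
  simp [Nat.lt_succ_iff]

lemma card_filter_cast {m m' : ℕ} (h : m' = m) (p : Fin m → Prop) [DecidablePred p] :
    ((Finset.univ : Finset (Fin m')).filter (fun j => p (Fin.cast h j))).card
      = ((Finset.univ : Finset (Fin m)).filter p).card := by
  subst h
  simp [Fin.cast]

/-! ### From tableau to model -/

variable {n : ℕ}

def sval (T : CatalanTableau n) (i : Fin T.k) : ℕ := T.m - T.lam i

def hval (T : CatalanTableau n) (j : Fin T.m) : ℕ :=
  ((Finset.univ : Finset (Fin T.k)).filter (fun i => sval T i ≤ (j : ℕ))).card - 1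

noncomputable def rval (T : CatalanTableau n) (j : Fin T.m) : Fin T.k :=
  (T.col_one j).choose

lemma rval_spec (T : CatalanTableau n) (j : Fin T.m) : T.f (rval T j) j = true :=
  (T.col_one j).choose_spec.1

lemma rval_uniq (T : CatalanTableau n) {i : Fin T.k} {j : Fin T.m}
    (h : T.f i j = true) : i = rval T j :=
  (T.col_one j).choose_spec.2 i h

lemma sval_mono (T : CatalanTableau n) {i i' : Fin T.k} (h : i ≤ i') :
    sval T i ≤ sval T i' :=
  Nat.sub_le_sub_left (T.lam_anti i i' h) _

lemma sval_zero (T : CatalanTableau n) : sval T ⟨0, T.hk⟩ = 0 := by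
  simp [sval, T.lam_first]

lemma card_pos (T : CatalanTableau n) (j : Fin T.m) :
    1 ≤ ((Finset.univ : Finset (Fin T.k)).filter (fun i => sval T i ≤ (j : ℕ))).card := by
  rw [Nat.one_le_iff_ne_zero, ← Nat.pos_iff_ne_zero, Finset.card_pos]
  exact ⟨⟨0, T.hk⟩, by simp [sval_zero]⟩

lemma le_hval_iff (T : CatalanTableau n) (i : Fin T.k) (j : Fin T.m) :
    (i : ℕ) ≤ hval T j ↔ sval T i ≤ (j : ℕ) := by
  constructor
  · intro h
    by_contra hs
    -- every element of the filter is < i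
    have hsub : ((Finset.univ : Finset (Fin T.k)).filter (fun i' => sval T i' ≤ (j : ℕ)))
        ⊆ (Finset.univ : Finset (Fin T.k)).filter (fun i' => (i' : ℕ) < (i : ℕ)) := by
      intro i' hi'
      simp only [Finset.mem_filter, Finset.mem_univ, true_and] at hi' ⊢
      by_contra hlt
      push_neg at hlt
      exact hs (le_trans (sval_mono T (by exact hlt)) hi')
    have hcard := Finset.card_le_card hsub
    rw [card_filter_lt_val] at hcard
    have h0 : (0 : ℕ) < (i : ℕ) := by
      by_contra h0'
      push_neg at h0'
      have hi0 : i = ⟨0, T.hk⟩ := by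
        apply Fin.ext
        show (i : ℕ) = 0
        omega
      rw [hi0, sval_zero] at hs
      exact hs (Nat.zero_le _)
    have := card_pos T j
    unfold hval at h
    have : min (i : ℕ) T.k = (i : ℕ) := min_eq_left (le_of_lt i.isLt)
    omega
  · intro h
    have hsub : ((Finset.univ : Finset (Fin T.k)).filter (fun i' : Fin T.k => (i' : ℕ) ≤ (i : ℕ)))
        ⊆ (Finset.univ : Finset (Fin T.k)).filter (fun i' => sval T i' ≤ (j : ℕ)) := by
      intro i' hi'
      simp only [Finset.mem_filter, Finset.mem_univ, true_and] at hi' ⊢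
      exact le_trans (sval_mono T (by exact hi')) h
    have hcard := Finset.card_le_card hsub
    rw [card_filter_le_val'] at hcard
    have : min ((i : ℕ) + 1) T.k = (i : ℕ) + 1 := min_eq_left i.isLt
    unfold hval
    omega

lemma hval_le (T : CatalanTableau n) (j : Fin T.m) : hval T j ≤ T.k - 1 := by
  unfold hval
  have : ((Finset.univ : Finset (Fin T.k)).filter (fun i => sval T i ≤ (j : ℕ))).card ≤ T.k := by
    refine le_trans (Finset.card_le_card (Finset.filter_subset _ _)) ?_
    simp
  omega

lemma hval_mono (T : CatalanTableau n) {j j' : Fin T.m} (h : (j : ℕ) ≤ (j' : ℕ)) :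
    hval T j ≤ hval T j' := by
  unfold hval
  have : ((Finset.univ : Finset (Fin T.k)).filter (fun i => sval T i ≤ (j : ℕ)))
      ⊆ ((Finset.univ : Finset (Fin T.k)).filter (fun i => sval T i ≤ (j' : ℕ))) := by
    intro i hi
    simp only [Finset.mem_filter, Finset.mem_univ, true_and] at hi ⊢
    omega
  have := Finset.card_le_card this
  omega

lemma sval_rval_le (T : CatalanTableau n) (j : Fin T.m) : sval T (rval T j) ≤ (j : ℕ) := by
  by_contra h
  push_neg at h
  have hfo := T.f_outside (rval T j) j h
  rw [rval_spec T j] at hfo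
  exact Bool.noConfusion hfo

noncomputable def toModel (T : CatalanTableau n) : Model :=
  ⟨T.k - 1, List.ofFn (fun j : Fin T.m => (hval T j, (rval T j : ℕ)))⟩

lemma toModel_size (T : CatalanTableau n) : (toModel T).size = n := by
  have := T.hkm
  have := T.hk
  simp only [toModel, Model.size, List.length_ofFn]
  omega

lemma rval_le_hval (T : CatalanTableau n) (j : Fin T.m) :
    (rval T j : ℕ) ≤ hval T j :=
  (le_hval_iff T _ j).mpr (sval_rval_le T j)

lemma toModel_rise (T : CatalanTableau n) {j j' : Fin T.m} (hjj : j < j')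
    (hr : (rval T j : ℕ) < (rval T j' : ℕ)) : hval T j < (rval T j' : ℕ) := by
  by_contra hcon
  push_neg at hcon
  -- then sval (rval j') ≤ j, contradiction with no_bad
  have hs : sval T (rval T j') ≤ (j : ℕ) := (le_hval_iff T _ j).mp hcon
  refine T.no_bad (rval T j') j (by unfold sval at hs; omega) ?_
    ⟨⟨rval T j, by exact hr, rval_spec T j⟩, ⟨j', hjj, rval_spec T j'⟩⟩
  by_contra hft
  rw [Bool.not_eq_false] at hft
  have := rval_uniq T hft
  rw [this] at hr
  omega

lemma toModel_ok (T : CatalanTableau n) : (toModel T).Ok := by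
  constructor
  · intro p hp
    simp only [toModel, List.mem_ofFn] at hp
    obtain ⟨j, rfl⟩ := hp
    exact ⟨rval_le_hval T j, by simpa [toModel] using hval_le T j⟩
  · simp only [toModel]
    rw [List.pairwise_ofFn]
    intro j j' hjj
    refine ⟨hval_mono T (le_of_lt hjj), ?_⟩
    rcases le_or_gt (rval T j' : ℕ) (rval T j : ℕ) with h | h
    · exact Or.inl h
    · exact Or.inr (toModel_rise T hjj h)

/-! ### From model to tableau -/

section ofModel

variable (x : Model)

def hcol (j : Fin x.cols.length) : ℕ := (x.cols.get j).1
def rcol (j : Fin x.cols.length) : ℕ := (x.cols.get j).2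

lemma rcol_le_hcol (hok : x.Ok) (j) : rcol x j ≤ hcol x j := (hok.1 _ (x.cols.get_mem j)).1
lemma hcol_le_c (hok : x.Ok) (j) : hcol x j ≤ x.c := (hok.1 _ (x.cols.get_mem j)).2

lemma hcol_rel (hok : x.Ok) {j j' : Fin x.cols.length} (h : j < j') : Rel (x.cols.get j) (x.cols.get j') :=
  List.pairwise_iff_get.mp hok.2 j j' h

lemma hcol_mono (hok : x.Ok) {j j' : Fin x.cols.length} (h : j ≤ j') : hcol x j ≤ hcol x j' := by
  rcases eq_or_lt_of_le h with rfl | h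
  · exact le_refl _
  · exact (hcol_rel x hok h).1

/-- number of columns with `h < i` -/
def cntlt (i : ℕ) : ℕ :=
  ((Finset.univ : Finset (Fin x.cols.length)).filter
    (fun j : Fin x.cols.length => hcol x j < i)).card

lemma cntlt_le_of_le (hok : x.Ok) (i : ℕ) (j : Fin x.cols.length) (h : i ≤ hcol x j) :
    cntlt x i ≤ (j : ℕ) := by
  have hsub : ((Finset.univ : Finset (Fin x.cols.length)).filter
      (fun j' : Fin x.cols.length => hcol x j' < i))
      ⊆ (Finset.univ : Finset (Fin x.cols.length)).filter
        (fun j' : Fin x.cols.length => (j' : ℕ) < (j : ℕ)) := by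
    intro j' hj'
    simp only [Finset.mem_filter, Finset.mem_univ, true_and] at hj' ⊢
    by_contra hge
    push_neg at hge
    have := hcol_mono x hok (show j ≤ j' from hge)
    omega
  have := Finset.card_le_card hsub
  rw [card_filter_lt_val] at this
  unfold cntlt
  omega

lemma lt_cntlt_of_lt (hok : x.Ok) (i : ℕ) (j : Fin x.cols.length) (h : hcol x j < i) :
    (j : ℕ) < cntlt x i := by
  have hsub : ((Finset.univ : Finset (Fin x.cols.length)).filter
      (fun j' : Fin x.cols.length => (j' : ℕ) ≤ (j : ℕ)))
      ⊆ (Finset.univ : Finset (Fin x.cols.length)).filter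
        (fun j' : Fin x.cols.length => hcol x j' < i) := by
    intro j' hj'
    simp only [Finset.mem_filter, Finset.mem_univ, true_and] at hj' ⊢
    exact lt_of_le_of_lt (hcol_mono x hok (show j' ≤ j from hj')) h
  have hcard := Finset.card_le_card hsub
  rw [card_filter_le_val'] at hcard
  have : min ((j : ℕ) + 1) x.cols.length = (j : ℕ) + 1 := min_eq_left j.isLt
  unfold cntlt
  omega

def lamOf (i : ℕ) : ℕ :=
  ((Finset.univ : Finset (Fin x.cols.length)).filter
    (fun j : Fin x.cols.length => i ≤ hcol x j)).card

lemma lamOf_add_cntlt (i : ℕ) : lamOf x i + cntlt x i = x.cols.length := by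
  have h := Finset.card_filter_add_card_filter_not
    (s := (Finset.univ : Finset (Fin x.cols.length)))
    (p := fun j : Fin x.cols.length => i ≤ hcol x j)
  have h2 : ((Finset.univ : Finset (Fin x.cols.length)).filter
      (fun j : Fin x.cols.length => ¬ i ≤ hcol x j))
      = (Finset.univ : Finset (Fin x.cols.length)).filter
        (fun j : Fin x.cols.length => hcol x j < i) := by
    apply Finset.filter_congr
    intro j _
    simp [not_le]
  rw [h2] at h
  simpa [lamOf, cntlt] using h

lemma sub_lamOf (i : ℕ) : x.cols.length - lamOf x i = cntlt x i := by
  have := lamOf_add_cntlt x i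
  omega

noncomputable def ofModel (hok : x.Ok) (hsz : x.size = n) : CatalanTableau n where
  k := x.c + 1
  m := x.cols.length
  hk := Nat.succ_pos _
  hkm := by simpa [Model.size] using hsz
  lam := fun i => lamOf x (i : ℕ)
  lam_le := fun i => by
    refine le_trans (Finset.card_le_card (Finset.filter_subset _ _)) ?_
    simp [lamOf]
  lam_first := by
    simp only [lamOf]
    rw [show ((Finset.univ : Finset (Fin x.cols.length)).filter
      (fun j : Fin x.cols.length => (0 : ℕ) ≤ hcol x j)) = Finset.univ from
      Finset.filter_true_of_mem (fun j _ => Nat.zero_le _)]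
    simp
  lam_anti := fun i i' h => by
    apply Finset.card_le_card
    intro j hj
    simp only [Finset.mem_filter, Finset.mem_univ, true_and] at hj ⊢
    exact le_trans (show (i : ℕ) ≤ (i' : ℕ) from h) hj
  f := fun i j => decide (rcol x j = (i : ℕ))
  f_outside := fun i j hj => by
    show decide (rcol x j = (i : ℕ)) = false
    rw [sub_lamOf] at hj
    have hh : hcol x j < (i : ℕ) := by
      by_contra hcon
      push_neg at hcon
      have := cntlt_le_of_le x hok (i : ℕ) j hcon
      omega
    have := rcol_le_hcol x hok j
    simp only [decide_eq_false_iff_not]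
    omega
  col_one := fun j => by
    refine ⟨⟨rcol x j, ?_⟩, by simp, ?_⟩
    · have h1 := rcol_le_hcol x hok j
      have h2 := hcol_le_c x hok j
      omega
    · intro i hi
      simp only [decide_eq_true_eq] at hi
      exact Fin.ext (by simpa using hi.symm)
  no_bad := fun i j hle hf => by
    rintro ⟨⟨i', hi', hfi'⟩, ⟨j', hj', hfj'⟩⟩
    rw [sub_lamOf] at hle
    simp only [decide_eq_true_eq] at hfi' hfj'
    have hhj : (i : ℕ) ≤ hcol x j := by
      by_contra hcon
      push_neg at hcon
      have := lt_cntlt_of_lt x hok (i : ℕ) j hcon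
      omega
    have hrel := hcol_rel x hok (show j < j' from hj')
    have e1 : (x.cols.get j').2 = (i : ℕ) := hfj'
    have e2 : (x.cols.get j).2 = (i' : ℕ) := hfi'
    have e3 : hcol x j = (x.cols.get j).1 := rfl
    have hii : (i' : ℕ) < (i : ℕ) := hi'
    rcases hrel.2 with h2 | h2 <;> omega

end ofModel

lemma ct_ext {n : ℕ} {T1 T2 : CatalanTableau n} (hk : T1.k = T2.k) (hm : T1.m = T2.m)
    (hlam : ∀ i : Fin T1.k, T1.lam i = T2.lam (Fin.cast hk i))
    (hf : ∀ (i : Fin T1.k) (j : Fin T1.m),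
      T1.f i j = T2.f (Fin.cast hk i) (Fin.cast hm j)) : T1 = T2 := by
  obtain ⟨k1, m1, hk1, hkm1, lam1, a1, b1, c1, f1, d1, e1, g1⟩ := T1
  obtain ⟨k2, m2, hk2, hkm2, lam2, a2, b2, c2, f2, d2, e2, g2⟩ := T2
  simp only at hk hm hlam hf
  subst hk
  subst hm
  have hlam' : lam1 = lam2 := funext fun i => by simpa using hlam i
  have hf' : f1 = f2 := funext fun i => funext fun j => by simpa using hf i j
  subst hlam'
  subst hf'
  rfl

lemma left_inv {n : ℕ} (T : CatalanTableau n) :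
    ofModel (toModel T) (toModel_ok T) (toModel_size T) = T := by
  have hk : (ofModel (toModel T) (toModel_ok T) (toModel_size T)).k = T.k := by
    have := T.hk
    simp only [ofModel, toModel]
    omega
  have hm : (ofModel (toModel T) (toModel_ok T) (toModel_size T)).m = T.m := by
    simp only [ofModel, toModel, List.length_ofFn]
  have hgr : ∀ j : Fin (toModel T).cols.length,
      (toModel T).cols.get j = (hval T (Fin.cast hm j), (rval T (Fin.cast hm j) : ℕ)) := by
    intro j
    show (List.ofFn (fun j : Fin T.m => (hval T j, (rval T j : ℕ)))).get _ = _
    exact (List.get_eq_getElem ..).trans (List.getElem_ofFn ..)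
  refine ct_ext hk hm (fun i => ?_) (fun i j => ?_)
  · -- lam
    show lamOf (toModel T) (i : ℕ) = T.lam (Fin.cast hk i)
    unfold lamOf
    have e1 : ((Finset.univ : Finset (Fin (toModel T).cols.length)).filter
        (fun j => (i : ℕ) ≤ hcol (toModel T) j))
        = ((Finset.univ : Finset (Fin (toModel T).cols.length)).filter
          (fun j => sval T (Fin.cast hk i) ≤ ((Fin.cast hm j : Fin T.m) : ℕ))) := by
      apply Finset.filter_congr
      intro j _
      show ((i : ℕ) ≤ hcol (toModel T) j) ↔ _
      unfold hcol
      rw [hgr j]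
      have := le_hval_iff T (Fin.cast hk i) (Fin.cast hm j)
      simpa using this
    rw [e1]; refine (card_filter_cast hm (fun j : Fin T.m => sval T (Fin.cast hk i) ≤ (j : ℕ))).trans ?_
    rw [card_filter_le_val]
    have h1 := T.lam_le (Fin.cast hk i)
    unfold sval
    omega
  · show decide (rcol (toModel T) j = (i : ℕ)) = T.f (Fin.cast hk i) (Fin.cast hm j)
    have hr : rcol (toModel T) j = (rval T (Fin.cast hm j) : ℕ) := by
      unfold rcol
      rw [hgr j]
    by_cases hft : T.f (Fin.cast hk i) (Fin.cast hm j) = true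
    · have := rval_uniq T hft
      rw [hft, hr, ← this]
      simp
    · rw [Bool.not_eq_true] at hft
      rw [hft, hr]
      simp only [decide_eq_false_iff_not]
      intro hc
      have : Fin.cast hk i = rval T (Fin.cast hm j) := Fin.ext (by simpa using hc.symm)
      rw [this] at hft
      rw [rval_spec T (Fin.cast hm j)] at hft
      exact Bool.noConfusion hft

lemma right_inv {n : ℕ} (x : Model) (hok : x.Ok) (hsz : x.size = n) :
    toModel (ofModel x hok hsz) = x := by
  set T' := ofModel x hok hsz with hT'
  have hm' : T'.m = x.cols.length := rfl
  have hk' : T'.k = x.c + 1 := rfl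
  -- key pointwise facts
  have hA : ∀ j : Fin T'.m, hval T' j = hcol x (Fin.cast hm' j) := by
    intro j
    unfold hval
    have e1 : ((Finset.univ : Finset (Fin T'.k)).filter (fun i => sval T' i ≤ (j : ℕ)))
        = ((Finset.univ : Finset (Fin T'.k)).filter
            (fun i : Fin T'.k => (i : ℕ) ≤ hcol x (Fin.cast hm' j))) := by
      apply Finset.filter_congr
      intro i _
      have e2 : sval T' i = cntlt x (i : ℕ) := by
        show T'.m - T'.lam i = _
        have : T'.lam i = lamOf x (i : ℕ) := rfl
        rw [this, hm']
        exact sub_lamOf x (i : ℕ)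
      rw [e2]
      constructor
      · intro h
        by_contra hcon
        push_neg at hcon
        have := lt_cntlt_of_lt x hok (i : ℕ) (Fin.cast hm' j) hcon
        simp only [Fin.coe_cast] at this
        omega
      · intro h
        have := cntlt_le_of_le x hok (i : ℕ) (Fin.cast hm' j) h
        simpa using this
    rw [e1]
    have : ((Finset.univ : Finset (Fin T'.k)).filter
        (fun i : Fin T'.k => (i : ℕ) ≤ hcol x (Fin.cast hm' j))).card
        = min (hcol x (Fin.cast hm' j) + 1) T'.k := card_filter_le_val' T'.k _
    rw [this, hk']
    have := hcol_le_c x hok (Fin.cast hm' j)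
    omega
  have hB : ∀ j : Fin T'.m, (rval T' j : ℕ) = rcol x (Fin.cast hm' j) := by
    intro j
    have hlt : rcol x (Fin.cast hm' j) < T'.k := by
      rw [hk']
      have h1 := rcol_le_hcol x hok (Fin.cast hm' j)
      have h2 := hcol_le_c x hok (Fin.cast hm' j)
      omega
    have hfj : T'.f ⟨rcol x (Fin.cast hm' j), hlt⟩ j = true := by
      show decide (rcol x (Fin.cast hm' j) = _) = true
      simp
    have := rval_uniq T' hfj
    rw [← this]
  -- now conclude
  show Model.mk (T'.k - 1) (List.ofFn (fun j : Fin T'.m => (hval T' j, (rval T' j : ℕ)))) = x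
  obtain ⟨c, cols⟩ := x
  rw [Model.mk.injEq]
  constructor
  · rw [hk']
    simp
  · apply List.ext_get
    · simp [hm']
    · intro j h1 h2
      rw [List.get_ofFn]
      have hj' : j < T'.m := by simpa using h1
      have := hA ⟨j, hj'⟩
      have := hB ⟨j, hj'⟩
      apply Prod.ext <;> simp_all [hcol, rcol, Fin.cast]

noncomputable def tabEquiv (n : ℕ) : CatalanTableau n ≃ {x : Model // x.Ok ∧ x.size = n} where
  toFun T := ⟨toModel T, toModel_ok T, toModel_size T⟩
  invFun x := ofModel x.1 x.2.1 x.2.2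
  left_inv T := left_inv T
  right_inv x := Subtype.ext (right_inv x.1 x.2.1 x.2.2)



lemma ne_nil_of_size {B : BinTree} {n : ℕ} (h : B.size = n) (hn : 1 ≤ n) :
    B ≠ BinTree.nil := by
  rintro rfl
  rw [show BinTree.nil.size = 0 from rfl] at h
  omega

noncomputable def treeEquiv (n : ℕ) (hn : 1 ≤ n) :
    {B : BinTree // B.size = n} ≃ {x : Model // x.Ok ∧ x.size = n} := by
  refine Equiv.ofBijective
    (fun B => ⟨Phi B.1, Phi_ok B.1, by
      rw [Phi_size B.1 (ne_nil_of_size B.2 hn)]; exact B.2⟩) ⟨?_, ?_⟩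
  · intro B1 B2 h
    simp only [Subtype.mk.injEq] at h
    exact Subtype.ext (Phi_inj B1.1 (ne_nil_of_size B1.2 hn) B2.1 (ne_nil_of_size B2.2 hn) h)
  · rintro ⟨x, hok, hsz⟩
    obtain ⟨B, hBnil, hBsize, hBPhi⟩ := Phi_surj n hn x hok hsz
    exact ⟨⟨B, hBsize⟩, Subtype.ext hBPhi⟩

end CTproof

/-- For every integer `n ≥ 1` there exists a bijection between the
set of Catalan tableaux of index `n` and the set of binary trees with `n`
vertices. -/
theorem catalanTableau_equiv_binTree (n : ℕ) (hn : 1 ≤ n) :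
    Nonempty (CatalanTableau n ≃ {B : BinTree // B.size = n}) := by
  exact ⟨(CTproof.tabEquiv n).trans (CTproof.treeEquiv n hn).symm⟩
end

section
/- For every integer n ≥ 1 and every word u of length n over {a,b}, the number of Catalan tableaux of index n+1 whose profile is u equals the number of lattice paths η (with unit north and east steps) that are weakly below the path ω_u. -/
namespace CTaux
open List

lemma length_eq_counts (w : List Bool) : w.length = w.count true + w.count false := by
  induction w with
  | nil => simp
  | cons x w ih =>
      cases x <;> simp only [List.length_cons, List.count_cons, ih] <;> simp <;> omega

lemma eha_length : ∀ (w : List Bool) (h : ℕ), (eastHeightsAux h w).length = w.count false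
  | [], _ => rfl
  | true :: w, h => by simp [eastHeightsAux, eha_length w (h+1), List.count_cons]
  | false :: w, h => by simp [eastHeightsAux, eha_length w h, List.count_cons]

lemma eha_ge : ∀ (w : List Bool) (h x : ℕ), x ∈ eastHeightsAux h w → h ≤ x
  | true :: w, h, x, hx => le_trans (Nat.le_succ h) (eha_ge w (h+1) x hx)
  | false :: w, h, x, hx => by
      rcases List.mem_cons.1 hx with rfl | hx
      · exact le_rfl
      · exact eha_ge w h x hx

lemma eha_le : ∀ (w : List Bool) (h x : ℕ), x ∈ eastHeightsAux h w → x ≤ h + w.count true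
  | true :: w, h, x, hx => by
      have := eha_le w (h+1) x hx
      simp [List.count_cons]; omega
  | false :: w, h, x, hx => by
      rcases List.mem_cons.1 hx with rfl | hx
      · simp
      · have := eha_le w h x hx
        simp [List.count_cons]; omega

lemma eha_sorted : ∀ (w : List Bool) (h : ℕ), List.Pairwise (· ≤ ·) (eastHeightsAux h w)
  | [], h => List.Pairwise.nil
  | true :: w, h => eha_sorted w (h+1)
  | false :: w, h => by
      rw [show eastHeightsAux h (false :: w) = h :: eastHeightsAux h w from rfl,
        List.pairwise_cons]
      exact ⟨fun x hx => eha_ge w h x hx, eha_sorted w h⟩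

lemma eha_replicate_true : ∀ (c h : ℕ) (w : List Bool),
    eastHeightsAux h (List.replicate c true ++ w) = eastHeightsAux (h + c) w
  | 0, h, w => by simp [eastHeightsAux]
  | c+1, h, w => by
      rw [List.replicate_succ, List.cons_append,
        show eastHeightsAux h (true :: (List.replicate c true ++ w)) =
          eastHeightsAux (h+1) (List.replicate c true ++ w) from rfl,
        eha_replicate_true c (h+1) w]
      ring_nf

def toPath (h K : ℕ) : List ℕ → List Bool
  | [] => List.replicate (K - h) true
  | x :: e => List.replicate (x - h) true ++ false :: toPath x K e

lemma tp_count_false : ∀ (e : List ℕ) (h K : ℕ), (toPath h K e).count false = e.length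
  | [], h, K => by simp [toPath, List.count_replicate]
  | x :: e, h, K => by simp [toPath, tp_count_false e x K, List.count_cons, List.count_replicate]

lemma tp_count_true : ∀ (e : List ℕ) (h K : ℕ), List.Chain (· ≤ ·) h e →
    (∀ x ∈ e, x ≤ K) → h ≤ K → (toPath h K e).count true = K - h
  | [], h, K, _, _, _ => by simp [toPath]
  | x :: e, h, K, hch, hb, hK => by
      rcases List.chain_cons.1 hch with ⟨hhx, hch'⟩
      have hxK : x ≤ K := hb x (List.mem_cons_self)
      rw [toPath, List.count_append, List.count_cons,
        tp_count_true e x K hch' (fun y hy => hb y (List.mem_cons_of_mem x hy)) hxK]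
      simp; omega

lemma tp_length : ∀ (e : List ℕ) (h K : ℕ), List.Chain (· ≤ ·) h e →
    (∀ x ∈ e, x ≤ K) → h ≤ K → (toPath h K e).length = (K - h) + e.length := by
  intro e h K h1 h2 h3
  rw [length_eq_counts, tp_count_true e h K h1 h2 h3, tp_count_false]

lemma tp_eha : ∀ (e : List ℕ) (h K : ℕ), List.Chain (· ≤ ·) h e →
    eastHeightsAux h (toPath h K e) = e
  | [], h, K, _ => by
      rw [toPath, show List.replicate (K-h) true = List.replicate (K-h) true ++ [] by simp,
        eha_replicate_true]
      rfl
  | x :: e, h, K, hch => by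
      rcases List.chain_cons.1 hch with ⟨hhx, hch'⟩
      rw [toPath, eha_replicate_true, Nat.add_sub_cancel' hhx,
        show eastHeightsAux x (false :: toPath x K e) = x :: eastHeightsAux x (toPath x K e)
          from rfl, tp_eha e x K hch']

lemma tp_step : ∀ (e : List ℕ) (h K : ℕ), (∀ x ∈ e, h + 1 ≤ x) → h + 1 ≤ K →
    toPath h K e = true :: toPath (h+1) K e
  | [], h, K, _, hK => by
      rw [toPath, toPath, show K - h = (K - (h+1)) + 1 by omega, List.replicate_succ]
  | x :: e, h, K, hb, hK => by
      have hx : h + 1 ≤ x := hb x (List.mem_cons_self)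
      rw [toPath, toPath, show x - h = (x - (h+1)) + 1 by omega, List.replicate_succ,
        List.cons_append]

lemma tp_of_word : ∀ (w : List Bool) (h : ℕ),
    toPath h (h + w.count true) (eastHeightsAux h w) = w
  | [], h => by simp [toPath, eastHeightsAux]
  | true :: w, h => by
      rw [show eastHeightsAux h (true :: w) = eastHeightsAux (h+1) w from rfl,
        show (true :: w).count true = w.count true + 1 by simp [List.count_cons],
        tp_step _ h _ (fun x hx => eha_ge w (h+1) x hx) (by omega),
        show h + (w.count true + 1) = (h+1) + w.count true by omega, tp_of_word w (h+1)]
  | false :: w, h => by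
      rw [show eastHeightsAux h (false :: w) = h :: eastHeightsAux h w from rfl,
        show (false :: w).count true = w.count true by simp [List.count_cons]]
      rw [toPath]
      simp only [Nat.sub_self, List.replicate_zero, List.nil_append]
      rw [tp_of_word w h]

lemma eha_inj (w w' : List Bool) (h : ℕ) (hc : w.count true = w'.count true)
    (he : eastHeightsAux h w = eastHeightsAux h w') : w = w' := by
  have h1 := tp_of_word w h
  have h2 := tp_of_word w' h
  rw [he, hc] at h1
  exact h1.symm.trans h2

end CTaux

namespace CTaux
open List

lemma count_false_take_mono (w : List Bool) {s t : ℕ} (hst : s ≤ t) :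
    (w.take s).count false ≤ (w.take t).count false := by
  have : w.take s = (w.take t).take s := by rw [List.take_take, Nat.min_eq_left hst]
  rw [this]
  exact List.Sublist.count_le _ (List.take_sublist _ _)

lemma take_counts (w : List Bool) {t : ℕ} (ht : t ≤ w.length) :
    (w.take t).count true + (w.take t).count false = t := by
  have := length_eq_counts (w.take t)
  rw [List.length_take, Nat.min_eq_left ht] at this
  omega

lemma eha_pos : ∀ (w : List Bool) (h j x : ℕ), (eastHeightsAux h w)[j]? = some x →
    (w.take (j + (x - h))).count false = j ∧ (w.take (j + (x - h))).count true = x - h ∧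
    (w.take (j + (x - h) + 1)).count false = j + 1 ∧ j + (x - h) < w.length
  | [], h, j, x, hx => by simp [eastHeightsAux] at hx
  | true :: w, h, j, x, hx => by
      rw [show eastHeightsAux h (true :: w) = eastHeightsAux (h+1) w from rfl] at hx
      have hxge : h + 1 ≤ x :=
        eha_ge w (h+1) x (by exact List.mem_of_getElem? hx)
      obtain ⟨h1, h2, h3, h4⟩ := eha_pos w (h+1) j x hx
      have he : j + (x - h) = (j + (x - (h+1))) + 1 := by omega
      rw [he]
      have hts : ∀ s, ((true :: w).take (s + 1)).count false = (w.take s).count false ∧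
          ((true :: w).take (s + 1)).count true = (w.take s).count true + 1 := by
        intro s
        constructor <;> simp [List.count_cons]
      refine ⟨((hts _).1).trans h1, ((hts _).2).trans (by omega), ?_, by simpa using h4⟩
      exact ((hts _).1).trans h3
  | false :: w, h, j, x, hx => by
      rw [show eastHeightsAux h (false :: w) = h :: eastHeightsAux h w from rfl] at hx
      match j, hx with
      | 0, hx =>
          have hxh : h = x := by simpa using hx
          subst hxh
          refine ⟨?_, ?_, ?_, ?_⟩ <;> simp [List.count_cons]
      | j+1, hx =>
          have hx' : (eastHeightsAux h w)[j]? = some x := by simpa using hx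
          obtain ⟨h1, h2, h3, h4⟩ := eha_pos w h j x hx'
          have hts : ∀ s, ((false :: w).take (s + 1)).count false = (w.take s).count false + 1 ∧
              ((false :: w).take (s + 1)).count true = (w.take s).count true := by
            intro s
            constructor <;> simp [List.count_cons]
          have he : (j + 1) + (x - h) = (j + (x - h)) + 1 := by omega
          rw [he]
          exact ⟨((hts _).1).trans (by omega), (hts _).2.trans h2,
            ((hts _).1).trans (by omega), by simpa using h4⟩

end CTaux

namespace CTaux
open List

lemma eha_length_eq {η u : List Bool} (hl : η.length = u.length)
    (hc : η.count true = u.count true) (h : ℕ) :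
    (eastHeightsAux h η).length = (eastHeightsAux h u).length := by
  rw [eha_length, eha_length]
  have h1 := length_eq_counts η
  have h2 := length_eq_counts u
  omega

lemma below_to_forall₂ {η u : List Bool} (hl : η.length = u.length)
    (hc : η.count true = u.count true)
    (hb : ∀ t, (η.take t).count true ≤ (u.take t).count true) :
    List.Forall₂ (· ≤ ·) (eastHeights η) (eastHeights u) := by
  rw [List.forall₂_iff_get]
  refine ⟨eha_length_eq hl hc 0, fun i h1 h2 => ?_⟩
  set x := (eastHeights η).get ⟨i, h1⟩ with hx
  set y := (eastHeights u).get ⟨i, h2⟩ with hy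
  have hxe : (eastHeightsAux 0 η)[i]? = some x := by
    show (eastHeights η)[i]? = some x
    rw [List.getElem?_eq_getElem h1]; rfl
  have hye : (eastHeightsAux 0 u)[i]? = some y := by
    show (eastHeights u)[i]? = some y
    rw [List.getElem?_eq_getElem h2]; rfl
  obtain ⟨e1, e2, e3, e4⟩ := eha_pos η 0 i x hxe
  obtain ⟨f1, f2, f3, f4⟩ := eha_pos u 0 i y hye
  simp only [Nat.sub_zero] at e1 e2 e3 e4 f1 f2 f3 f4
  by_contra hlt
  push_neg at hlt
  have hcf : (u.take (i + y + 1)).count true = y := by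
    have := take_counts u (t := i + y + 1) f4
    omega
  have hbb := hb (i + y + 1)
  rw [hcf] at hbb
  have hmono : ((η.take (i + y + 1)).count false) ≤ i := by
    have := count_false_take_mono η (s := i + y + 1) (t := i + x) (by omega)
    omega
  have hlen : i + y + 1 ≤ η.length := by omega
  have := take_counts η (t := i + y + 1) hlen
  omega

lemma forall₂_to_below {η u : List Bool} (hl : η.length = u.length)
    (hc : η.count true = u.count true)
    (hf : List.Forall₂ (· ≤ ·) (eastHeights η) (eastHeights u)) :
    ∀ t, (η.take t).count true ≤ (u.take t).count true := by
  intro t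
  rcases le_or_gt η.length t with hge | hlt
  · rw [List.take_of_length_le hge, List.take_of_length_le (hl ▸ hge), hc]
  · by_contra hgt
    push_neg at hgt
    set j := (η.take t).count false with hj
    have htleη : t ≤ η.length := le_of_lt hlt
    have hη := take_counts η htleη
    have hu := take_counts u (hl ▸ htleη)
    have hufal : j + 1 ≤ (u.take t).count false := by omega
    have hcfeq : η.count false = u.count false := by
      have h3 := length_eq_counts η
      have h4 := length_eq_counts u
      omega
    have hjmu : j + 1 ≤ u.count false := by
      have := count_false_take_mono u (s := t) (t := u.length) (hl ▸ htleη)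
      rw [List.take_length] at this
      omega
    obtain ⟨hlen2, hget⟩ := List.forall₂_iff_get.1 hf
    have hju : j < (eastHeights u).length := by
      rw [eastHeights, eha_length]; omega
    have hjη : j < (eastHeights η).length := by omega
    have hxy := hget j hjη hju
    set x := (eastHeights η).get ⟨j, hjη⟩ with hx
    set y := (eastHeights u).get ⟨j, hju⟩ with hy
    have hxe : (eastHeightsAux 0 η)[j]? = some x := by
      show (eastHeights η)[j]? = some x
      rw [List.getElem?_eq_getElem hjη]; rfl
    have hye : (eastHeightsAux 0 u)[j]? = some y := by
      show (eastHeights u)[j]? = some y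
      rw [List.getElem?_eq_getElem hju]; rfl
    obtain ⟨e1, e2, e3, e4⟩ := eha_pos η 0 j x hxe
    obtain ⟨f1, f2, f3, f4⟩ := eha_pos u 0 j y hye
    simp only [Nat.sub_zero] at e1 e2 e3 e4 f1 f2 f3 f4
    have hty : j + y + 1 ≤ t := by
      by_contra hh
      push_neg at hh
      have := count_false_take_mono u (s := t) (t := j + y) (by omega)
      omega
    have := count_false_take_mono η (s := j + x + 1) (t := t) (by omega)
    omega

end CTaux

namespace CTaux
open List

lemma chain_of_sorted {e : List ℕ} (he : e.Pairwise (· ≤ ·)) : List.Chain (· ≤ ·) 0 e := by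
  show List.IsChain _ (0 :: e)
  rw [List.isChain_iff_pairwise]
  rw [List.pairwise_cons]
  exact ⟨fun x _ => Nat.zero_le x, he⟩

lemma forall₂_le_mem {e tL : List ℕ} (hf : List.Forall₂ (· ≤ ·) e tL) {K : ℕ}
    (htL : ∀ y ∈ tL, y ≤ K) : ∀ x ∈ e, x ≤ K := by
  intro x hx
  obtain ⟨hlen, hget⟩ := List.forall₂_iff_get.1 hf
  obtain ⟨⟨i, hi⟩, rfl⟩ := List.mem_iff_get.1 hx
  exact le_trans (hget i hi (hlen ▸ hi)) (htL _ (List.get_mem _ _))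

lemma card_paths (u : List Bool) :
    Nat.card {η : List Bool // weaklyBelow u η} =
      Nat.card {e : List ℕ // e.Pairwise (· ≤ ·) ∧ List.Forall₂ (· ≤ ·) e (eastHeights u)} := by
  set K := u.count true with hK
  have htLle : ∀ y ∈ eastHeights u, y ≤ K := by
    intro y hy
    simpa using eha_le u 0 y hy
  refine Nat.card_eq_of_bijective
    (fun η => ⟨eastHeights η.1, eha_sorted η.1 0,
      below_to_forall₂ η.2.1 η.2.2.1 η.2.2.2⟩) ⟨?_, ?_⟩
  · rintro ⟨η, hη⟩ ⟨η', hη'⟩ hee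
    have : eastHeights η = eastHeights η' := congrArg Subtype.val hee
    exact Subtype.ext (eha_inj η η' 0 (hη.2.1.trans hη'.2.1.symm) this)
  · rintro ⟨e, hsort, hf⟩
    have hch : List.Chain (· ≤ ·) 0 e := chain_of_sorted hsort
    have hbd : ∀ x ∈ e, x ≤ K := forall₂_le_mem hf htLle
    have hlenf : e.length = (eastHeights u).length := (List.forall₂_iff_get.1 hf).1
    have hcf : (toPath 0 K e).count false = e.length := tp_count_false e 0 K
    have hct : (toPath 0 K e).count true = K := by
      simpa using tp_count_true e 0 K hch hbd (Nat.zero_le K)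
    have heha : eastHeightsAux 0 (toPath 0 K e) = e := tp_eha e 0 K hch
    have hlen : (toPath 0 K e).length = u.length := by
      rw [length_eq_counts, hct, hcf, hlenf, eastHeights, eha_length,
        length_eq_counts u]
    refine ⟨⟨toPath 0 K e, hlen, hct, ?_⟩, ?_⟩
    · exact forall₂_to_below hlen hct (by rw [show eastHeights (toPath 0 K e) = e from heha]; exact hf)
    · exact Subtype.ext heha

end CTaux

namespace CTaux
open List

lemma eq_of_perm_of_sorted {r : ℕ → ℕ → Prop} [Std.Antisymm r] {l₁ l₂ : List ℕ}
    (hp : l₁ ~ l₂) (h₁ : l₁.Pairwise r) (h₂ : l₂.Pairwise r) : l₁ = l₂ :=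
  List.Perm.eq_of_pairwise' h₁ h₂ hp

def maxL (l : List ℕ) : ℕ := l.foldr max 0

lemma le_maxL : ∀ (l : List ℕ), ∀ y ∈ l, y ≤ maxL l
  | x :: l, y, hy => by
      rcases List.mem_cons.1 hy with rfl | hy
      · exact le_max_left _ _
      · exact le_trans (le_maxL l y hy) (le_max_right _ _)

lemma maxL_mem : ∀ (l : List ℕ), l ≠ [] → maxL l ∈ l
  | [x], _ => by simp [maxL]
  | x :: y :: l, _ => by
      have h : maxL (x :: y :: l) = max x (maxL (y :: l)) := rfl
      rcases le_total x (maxL (y :: l)) with hle | hle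
      · rw [h, max_eq_right hle]
        exact List.mem_cons_of_mem _ (maxL_mem (y :: l) (by simp))
      · rw [h, max_eq_left hle]
        exact List.mem_cons_self

def pick (t : ℕ) (e : List ℕ) : ℕ := maxL (e.filter (· ≤ t))

lemma pick_mem {t : ℕ} {e : List ℕ} {z : ℕ} (hz : z ∈ e) (hzt : z ≤ t) :
    pick t e ∈ e ∧ pick t e ≤ t := by
  have hne : e.filter (· ≤ t) ≠ [] := by
    intro h
    have : z ∈ e.filter (· ≤ t) := List.mem_filter.2 ⟨hz, by simpa using hzt⟩
    simp [h] at this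
  have := maxL_mem _ hne
  rcases List.mem_filter.1 this with ⟨h1, h2⟩
  exact ⟨h1, by simpa [pick] using h2⟩

lemma pick_max {t : ℕ} {e : List ℕ} {y : ℕ} (hy : y ∈ e) (hyt : y ≤ t) :
    y ≤ pick t e :=
  le_maxL _ y (List.mem_filter.2 ⟨hy, by simpa using hyt⟩)

def greedy : List ℕ → List ℕ → List ℕ
  | [], _ => []
  | t :: ts, e => pick t e :: greedy ts (e.erase (pick t e))

/-- removal lemma -/
lemma forall₂_erase : ∀ (e : List ℕ) (t : ℕ) (ts : List ℕ) (x : ℕ),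
    List.Pairwise (· ≤ ·) (t :: ts) → List.Forall₂ (· ≤ ·) e (t :: ts) → x ∈ e →
    List.Forall₂ (· ≤ ·) (e.erase x) ts
  | [], _, _, x, _, _, hx => absurd hx (List.not_mem_nil)
  | y :: e', t, ts, x, hsort, hf, hx => by
    rcases List.forall₂_cons.1 hf with ⟨hyt, hf'⟩
    by_cases hxy : y = x
    · subst hxy
      rwa [List.erase_cons_head]
    · rw [List.erase_cons, if_neg (by simpa using hxy)]
      have hx' : x ∈ e' := by
        rcases List.mem_cons.1 hx with h | h
        · exact absurd h.symm hxy
        · exact h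
      rcases ts with _ | ⟨t₂, ts'⟩
      · have := List.forall₂_nil_right_iff.1 hf'
        subst this
        simp at hx'
      · refine List.forall₂_cons.2 ⟨?_, ?_⟩
        · exact le_trans hyt (List.rel_of_pairwise_cons hsort List.mem_cons_self)
        · exact forall₂_erase e' t₂ ts' x (List.pairwise_cons.1 hsort).2 hf' hx'

def pairCond (p q : ℕ × ℕ) : Prop := q.2 ≤ p.1 → q.2 ≤ p.2

lemma zipmem : ∀ (ts r : List ℕ) (y : ℕ), y ∈ r → r.length ≤ ts.length →
    ∃ a, (a, y) ∈ ts.zip r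
  | _, [], y, hy, _ => absurd hy (List.not_mem_nil)
  | [], z :: r, y, hy, hl => by simp at hl
  | t :: ts, z :: r, y, hy, hl => by
      rcases List.mem_cons.1 hy with rfl | hy
      · exact ⟨t, List.mem_cons_self⟩
      · obtain ⟨a, ha⟩ := zipmem ts r y hy (by simpa using hl)
        exact ⟨a, List.mem_cons_of_mem _ ha⟩

lemma greedy_main : ∀ (ts : List ℕ) (e : List ℕ), List.Pairwise (· ≤ ·) ts →
    List.Forall₂ (· ≤ ·) e ts →
    greedy ts e ~ e ∧ List.Forall₂ (· ≤ ·) (greedy ts e) ts ∧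
      List.Pairwise pairCond (ts.zip (greedy ts e))
  | [], e, _, hf => by
      have := List.forall₂_nil_right_iff.1 hf
      subst this
      exact ⟨List.Perm.refl _, List.Forall₂.nil, List.Pairwise.nil⟩
  | t :: ts', e, hsort, hf => by
      rcases e with _ | ⟨e₀, e'⟩
      · have := List.forall₂_nil_left_iff.1 hf
        simp at this
      rcases List.forall₂_cons.1 hf with ⟨he₀, hf'⟩
      set x := pick t (e₀ :: e') with hx
      obtain ⟨hxm, hxt⟩ := pick_mem (List.mem_cons_self) he₀
      have her : List.Forall₂ (· ≤ ·) ((e₀ :: e').erase x) ts' :=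
        forall₂_erase (e₀ :: e') t ts' x hsort hf hxm
      obtain ⟨ih1, ih2, ih3⟩ := greedy_main ts' ((e₀ :: e').erase x)
        (List.pairwise_cons.1 hsort).2 her
      have hgr : greedy (t :: ts') (e₀ :: e') =
          x :: greedy ts' ((e₀ :: e').erase x) := rfl
      refine ⟨?_, ?_, ?_⟩
      · rw [hgr]
        exact (ih1.cons x).trans (List.perm_cons_erase hxm).symm
      · rw [hgr]
        exact List.forall₂_cons.2 ⟨hxt, ih2⟩
      · rw [hgr, List.zip_cons_cons, List.pairwise_cons]
        refine ⟨?_, ih3⟩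
        intro q hq hqt
        have hq2 : q.2 ∈ greedy ts' ((e₀ :: e').erase x) := (List.of_mem_zip hq).2
        have hqe : q.2 ∈ e₀ :: e' :=
          List.mem_of_mem_erase (ih1.subset hq2)
        exact pick_max hqe hqt

lemma greedy_uniq : ∀ (ts r : List ℕ), List.Forall₂ (· ≤ ·) r ts →
    List.Pairwise pairCond (ts.zip r) →
    greedy ts (List.insertionSort (· ≤ ·) r) = r
  | [], r, hf, _ => by
      have := List.forall₂_nil_right_iff.1 hf
      subst this
      rfl
  | t :: ts', r, hf, hpw => by
      rcases r with _ | ⟨r₀, r'⟩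
      · have := List.forall₂_nil_left_iff.1 hf
        simp at this
      rcases List.forall₂_cons.1 hf with ⟨hr₀, hf'⟩
      rw [List.zip_cons_cons, List.pairwise_cons] at hpw
      set e := List.insertionSort (· ≤ ·) (r₀ :: r') with hee
      have hperm : e ~ r₀ :: r' := List.perm_insertionSort _ _
      have hmax : ∀ y ∈ r₀ :: r', y ≤ t → y ≤ r₀ := by
        intro y hy hyt
        rcases List.mem_cons.1 hy with rfl | hy
        · exact le_rfl
        · obtain ⟨a, ha⟩ := zipmem ts' r' y hy (le_of_eq (List.Forall₂.length_eq hf'))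
          exact hpw.1 (a, y) ha hyt
      have hpick : pick t e = r₀ := by
        have h1 : r₀ ∈ e := hperm.mem_iff.2 (List.mem_cons_self)
        obtain ⟨hm, hle⟩ := pick_mem h1 hr₀
        exact le_antisymm (hmax _ (hperm.subset hm) hle) (pick_max h1 hr₀)
      have herase : e.erase r₀ = List.insertionSort (· ≤ ·) r' := by
        refine eq_of_perm_of_sorted ?_ ?_ (List.pairwise_insertionSort _ _)
        · exact ((hperm.erase r₀).trans (by rw [List.erase_cons_head])).trans
            (List.perm_insertionSort _ _).symm
        · exact (List.pairwise_insertionSort _ _).sublist List.erase_sublist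
      have : greedy (t :: ts') e = pick t e :: greedy ts' (e.erase (pick t e)) := rfl
      rw [this, hpick, herase, greedy_uniq ts' r' hf' hpw.2]

lemma sort_bound : ∀ (ts r : List ℕ), List.Pairwise (· ≤ ·) ts →
    List.Forall₂ (· ≤ ·) r ts →
    List.Forall₂ (· ≤ ·) (List.insertionSort (· ≤ ·) r) ts
  | [], r, _, hf => by
      have := List.forall₂_nil_right_iff.1 hf
      subst this
      exact List.Forall₂.nil
  | t :: ts', r, hsort, hf => by
      rcases r with _ | ⟨r₀, r'⟩
      · have := List.forall₂_nil_left_iff.1 hf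
        simp at this
      rcases List.forall₂_cons.1 hf with ⟨hr₀, hf'⟩
      have hperm : List.insertionSort (· ≤ ·) (r₀ :: r') ~ r₀ :: r' :=
        List.perm_insertionSort _ _
      have hsorted := List.pairwise_insertionSort (· ≤ ·) (r₀ :: r')
      rcases hs : List.insertionSort (· ≤ ·) (r₀ :: r') with _ | ⟨y, s₂⟩
      · rw [hs] at hperm
        have := hperm.length_eq
        simp at this
      rw [hs] at hperm hsorted
      have hyr₀ : y ≤ r₀ := by
        have hr₀m : r₀ ∈ y :: s₂ := hperm.mem_iff.2 (List.mem_cons_self)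
        rcases List.mem_cons.1 hr₀m with h | h
        · exact h ▸ le_rfl
        · exact List.rel_of_pairwise_cons hsorted h
      have hym : y ∈ r₀ :: r' := hperm.subset (List.mem_cons_self)
      have hs₂ : s₂ = List.insertionSort (· ≤ ·) ((r₀ :: r').erase y) := by
        refine eq_of_perm_of_sorted ?_ (List.pairwise_cons.1 hsorted).2
          (List.pairwise_insertionSort _ _)
        exact (List.cons_perm_iff_perm_erase.1 hperm).2.trans
          (List.perm_insertionSort _ _).symm
      refine List.forall₂_cons.2 ⟨le_trans hyr₀ hr₀, ?_⟩
      rw [hs₂]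
      exact sort_bound ts' _ (List.pairwise_cons.1 hsort).2
        (forall₂_erase _ t ts' y hsort hf hym)

lemma card_middle (tL : List ℕ) (hs : List.Pairwise (· ≤ ·) tL) :
    Nat.card {e : List ℕ // List.Pairwise (· ≤ ·) e ∧ List.Forall₂ (· ≤ ·) e tL} =
      Nat.card {r : List ℕ // List.Forall₂ (· ≤ ·) r tL ∧
        List.Pairwise pairCond (tL.zip r)} := by
  refine Nat.card_eq_of_bijective (fun e =>
    ⟨greedy tL e.1, (greedy_main tL e.1 hs e.2.2).2.1, (greedy_main tL e.1 hs e.2.2).2.2⟩)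
    ⟨?_, ?_⟩
  · rintro ⟨e, hse, hfe⟩ ⟨e', hse', hfe'⟩ hgg
    have hgg' : greedy tL e = greedy tL e' := congrArg Subtype.val hgg
    have h1 := (greedy_main tL e hs hfe).1
    have h2 := (greedy_main tL e' hs hfe').1
    exact Subtype.ext (eq_of_perm_of_sorted ((h1.symm.trans (hgg' ▸ h2))) hse hse')
  · rintro ⟨r, hfr, hpr⟩
    refine ⟨⟨List.insertionSort (· ≤ ·) r, List.pairwise_insertionSort _ _,
      sort_bound tL r hs hfr⟩, ?_⟩
    exact Subtype.ext (greedy_uniq tL r hfr hpr)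

end CTaux

namespace CTaux
open List

def blocks (k : ℕ) (L : ℕ → ℕ) : List Bool :=
  (List.range k).flatMap (fun i => true :: List.replicate (L i - L (i+1)) false)

lemma blocks_zero (L : ℕ → ℕ) : blocks 0 L = [] := rfl

lemma blocks_succ (k : ℕ) (L : ℕ → ℕ) :
    blocks (k+1) L = true :: (List.replicate (L 0 - L 1) false ++ blocks k (fun i => L (i+1))) := by
  rw [blocks, List.range_succ_eq_map, List.flatMap_cons, List.flatMap_map]
  rfl

lemma blocks_count_true : ∀ (k : ℕ) (L : ℕ → ℕ), (blocks k L).count true = k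
  | 0, L => rfl
  | k+1, L => by
      rw [blocks_succ, List.count_cons, List.count_append, List.count_replicate,
        blocks_count_true k (fun i => L (i+1))]
      simp

lemma blocks_count_false : ∀ (k : ℕ) (L : ℕ → ℕ), (∀ i, L (i+1) ≤ L i) →
    (blocks k L).count false = L 0 - L k
  | 0, L, _ => by simp [blocks_zero]
  | k+1, L, hanti => by
      rw [blocks_succ, List.count_cons, List.count_append, List.count_replicate,
        blocks_count_false k (fun i => L (i+1)) (fun i => hanti (i+1))]
      have h1 : L 1 ≤ L 0 := hanti 0
      have h2 : L (k+1) ≤ L 1 := by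
        clear h1
        induction k with
        | zero => exact le_rfl
        | succ k ih => exact le_trans (hanti (k+1)) ih
      simp
      omega

lemma eha_replicate_false : ∀ (d h : ℕ) (w : List Bool),
    eastHeightsAux h (List.replicate d false ++ w) = List.replicate d h ++ eastHeightsAux h w
  | 0, h, w => by simp
  | d+1, h, w => by
      rw [List.replicate_succ, List.cons_append,
        show eastHeightsAux h (false :: (List.replicate d false ++ w)) =
          h :: eastHeightsAux h (List.replicate d false ++ w) from rfl,
        eha_replicate_false d h w, List.replicate_succ, List.cons_append]

lemma blocks_eha : ∀ (k : ℕ) (L : ℕ → ℕ) (h : ℕ),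
    eastHeightsAux h (blocks k L) =
      (List.range k).flatMap (fun i => List.replicate (L i - L (i+1)) (h + i + 1))
  | 0, L, h => rfl
  | k+1, L, h => by
      rw [blocks_succ,
        show eastHeightsAux h (true :: (List.replicate (L 0 - L 1) false ++ blocks k (fun i => L (i+1)))) =
          eastHeightsAux (h+1) (List.replicate (L 0 - L 1) false ++ blocks k (fun i => L (i+1))) from rfl,
        eha_replicate_false, blocks_eha k (fun i => L (i+1)) (h+1),
        List.range_succ_eq_map, List.flatMap_cons, List.flatMap_map]
      congr 1
      congr 1
      funext i
      simp only [Nat.succ_eq_add_one]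
      congr 1
      omega

lemma sum_ite_range : ∀ (k : ℕ) (f : ℕ → ℕ) (y : ℕ),
    (((List.range k).map (fun i => if i = y then f i else 0)).sum) =
      if y < k then f y else 0
  | 0, f, y => by simp
  | k+1, f, y => by
      rw [List.range_succ, List.map_append, List.sum_append, sum_ite_range k f y]
      simp only [List.map_cons, List.map_nil, List.sum_cons, List.sum_nil]
      rcases lt_trichotomy y k with h | h | h
      · rw [if_pos h, if_neg (show ¬ k = y by omega), if_pos (show y < k + 1 by omega)]
        omega
      · subst h
        rw [if_neg (lt_irrefl y), if_pos rfl, if_pos (Nat.lt_succ_self y)]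
        omega
      · rw [if_neg (show ¬ y < k by omega), if_neg (show ¬ k = y by omega),
          if_neg (show ¬ y < k + 1 by omega)]
        omega

end CTaux

namespace CTaux
open List

/-- the row-lengths determined by a word -/
def lamU (u : List Bool) (i : ℕ) : ℕ :=
  (eastHeights u).countP (fun x => decide (i ≤ x))

lemma lamU_anti (u : List Bool) (i : ℕ) : lamU u (i+1) ≤ lamU u i :=
  List.countP_mono_left (fun x _ h => by
    simp only [decide_eq_true_eq] at h ⊢
    omega)

lemma lamU_anti' (u : List Bool) {i i' : ℕ} (h : i ≤ i') : lamU u i' ≤ lamU u i := by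
  induction i' with
  | zero => simp_all
  | succ i' ih =>
      rcases Nat.lt_or_ge i (i'+1) with h' | h'
      · exact le_trans (lamU_anti u i') (ih (by omega))
      · have : i = i' + 1 := by omega
        subst this
        exact le_rfl

lemma lamU_le (u : List Bool) (i : ℕ) : lamU u i ≤ (eastHeights u).length :=
  List.countP_le_length

lemma lamU_zero (u : List Bool) : lamU u 0 = (eastHeights u).length := by
  rw [lamU, List.countP_eq_length]
  intro a _
  simp

lemma tL_lt_k (u : List Bool) : ∀ x ∈ eastHeights u, x < u.count true + 1 := by
  intro x hx
  have := eha_le u 0 x hx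
  omega

lemma lamU_eq_zero (u : List Bool) {i : ℕ} (hi : u.count true + 1 ≤ i) : lamU u i = 0 := by
  rw [lamU, List.countP_eq_zero]
  intro x hx
  have := tL_lt_k u x hx
  simp only [decide_eq_true_eq]
  omega

lemma countP_split (l : List ℕ) (i : ℕ) :
    l.countP (fun x => decide (i ≤ x)) =
      l.countP (fun x => decide (i+1 ≤ x)) + l.countP (fun x => decide (x = i)) := by
  induction l with
  | nil => rfl
  | cons a l ih =>
      simp only [List.countP_cons, decide_eq_true_eq, ih]
      split_ifs <;> omega

lemma countP_take_drop {α : Type*} (p : α → Bool) (l : List α) (t : ℕ) :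
    l.countP p = (l.take t).countP p + (l.drop t).countP p := by
  rw [← List.countP_append, List.take_append_drop]

lemma sorted_getElem_mono {l : List ℕ} (hs : l.Pairwise (· ≤ ·)) {a b : ℕ} (hab : a ≤ b)
    (hb : b < l.length) : l[a]'(lt_of_le_of_lt hab hb) ≤ l[b] := by
  have := hs.rel_get_of_le (a := ⟨a, lt_of_le_of_lt hab hb⟩) (b := ⟨b, hb⟩)
    (Fin.mk_le_mk.2 hab)
  simpa [List.get_eq_getElem] using this

lemma lamU_threshold {u : List Bool} {i j : ℕ} (hj : j < (eastHeights u).length) :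
    i ≤ (eastHeights u)[j] ↔ (eastHeights u).length - lamU u i ≤ j := by
  have hsorted : (eastHeights u).Pairwise (· ≤ ·) := eha_sorted u 0
  have hle : lamU u i ≤ (eastHeights u).length := lamU_le u i
  constructor
  · intro hi
    have hdrop : ((eastHeights u).drop j).countP (fun x => decide (i ≤ x)) =
        ((eastHeights u).drop j).length := by
      rw [List.countP_eq_length]
      intro x hx
      obtain ⟨⟨i', hi'⟩, rfl⟩ := List.mem_iff_get.1 hx
      simp only [List.get_eq_getElem, ← List.getElem_drop' (xs := eastHeights u)
        (i := j) (j := i') (by simp only [List.length_drop] at hi'; omega)]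
      simp only [decide_eq_true_eq]
      exact le_trans hi (sorted_getElem_mono hsorted (Nat.le_add_right j i')
        (by simp only [List.length_drop] at hi'; omega))
    have : (eastHeights u).length - j ≤ lamU u i := by
      rw [lamU, countP_take_drop _ _ j, hdrop, List.length_drop]
      omega
    omega
  · intro hmj
    by_contra hlt
    push_neg at hlt
    have htake : ((eastHeights u).take (j+1)).countP (fun x => decide (i ≤ x)) = 0 := by
      rw [List.countP_eq_zero]
      intro x hx
      obtain ⟨⟨i', hi'⟩, rfl⟩ := List.mem_iff_get.1 hx
      have hi'' : i' < (eastHeights u).length := lt_of_lt_of_le hi'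
        (by simpa using List.length_take_le (j+1) (eastHeights u))
      have hi'j : i' < j + 1 := by
        simp only [List.length_take] at hi'
        omega
      simp only [List.get_eq_getElem, ← List.getElem_take' (xs := eastHeights u) hi'' hi'j,
        decide_eq_true_eq]
      have := sorted_getElem_mono hsorted (show i' ≤ j by omega) hj
      omega
    have : lamU u i ≤ (eastHeights u).length - (j+1) := by
      rw [lamU, countP_take_drop _ _ (j+1), htake]
      simpa using List.countP_le_length (l := (eastHeights u).drop (j+1)) (p := fun x => decide (i ≤ x))
    omega

end CTaux

namespace CTaux
open List

lemma eha_succ : ∀ (w : List Bool) (h : ℕ),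
    eastHeightsAux (h+1) w = (eastHeightsAux h w).map (· + 1)
  | [], h => rfl
  | true :: w, h => by
      rw [show eastHeightsAux (h+1) (true :: w) = eastHeightsAux (h+2) w from rfl,
        show eastHeightsAux h (true :: w) = eastHeightsAux (h+1) w from rfl,
        eha_succ w (h+1)]
  | false :: w, h => by
      rw [show eastHeightsAux (h+1) (false :: w) = (h+1) :: eastHeightsAux (h+1) w from rfl,
        show eastHeightsAux h (false :: w) = h :: eastHeightsAux h w from rfl,
        List.map_cons, eha_succ w h]

lemma count_eq_countP_eq (y : ℕ) (l : List ℕ) :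
    l.count y = l.countP (fun x => decide (x = y)) := by
  rw [List.count]
  apply List.countP_congr
  intro a _
  simp

lemma blocks_lamU (u : List Bool) :
    blocks (u.count true + 1) (lamU u) = true :: u := by
  set k := u.count true + 1 with hk
  apply eha_inj _ _ 0
  · rw [blocks_count_true]
    simp [List.count_cons, hk]
  · have hW : eastHeightsAux 0 (true :: u) = (eastHeightsAux 0 u).map (· + 1) := by
      rw [show eastHeightsAux 0 (true :: u) = eastHeightsAux 1 u from rfl]
      exact eha_succ u 0
    rw [hW, blocks_eha]
    refine eq_of_perm_of_sorted (r := fun a b : ℕ => a ≤ b) (List.perm_iff_count.2 fun x => ?_) ?_ ?_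
    · rw [List.count_flatMap]
      have hfun : ∀ i ∈ List.range k, (List.count x ∘ fun i =>
          List.replicate (lamU u i - lamU u (i+1)) (0 + i + 1)) i =
          (fun i => if i = x - 1 ∧ 1 ≤ x then lamU u i - lamU u (i+1) else 0) i := by
        intro i _
        simp only [Function.comp]
        rw [List.count_replicate]
        congr 1
        simp only [Nat.zero_add, eq_iff_iff, beq_iff_eq]
        omega
      rw [List.map_congr_left hfun]
      rcases Nat.eq_zero_or_pos x with rfl | hx
      · have h0 : ∀ i ∈ List.range k, (fun i => if i = 0 - 1 ∧ 1 ≤ 0 then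
            lamU u i - lamU u (i+1) else 0) i = (fun _ => 0) i := by
          intro i _
          simp
        rw [List.map_congr_left h0]
        have : List.count 0 ((eastHeightsAux 0 u).map (· + 1)) = 0 := by
          rw [List.count_eq_zero]
          intro hmem
          obtain ⟨a, _, ha⟩ := List.mem_map.1 hmem
          omega
        rw [this]
        simp [List.map_const]
      · obtain ⟨y, rfl⟩ : ∃ y, x = y + 1 := ⟨x - 1, by omega⟩
        have h1 : ∀ i ∈ List.range k, (fun i => if i = (y+1) - 1 ∧ 1 ≤ y+1 then
            lamU u i - lamU u (i+1) else 0) i =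
            (fun i => if i = y then lamU u i - lamU u (i+1) else 0) i := by
          intro i _
          dsimp only
          split_ifs with hA hB <;> first | rfl | omega
        rw [List.map_congr_left h1, sum_ite_range]
        have hcy : List.count (y+1) ((eastHeightsAux 0 u).map (· + 1)) =
            List.count y (eastHeightsAux 0 u) :=
          List.count_map_of_injective _ _ (fun a b hab => by omega) y
        rw [hcy, count_eq_countP_eq]
        have hd : lamU u y - lamU u (y+1) =
            (eastHeightsAux 0 u).countP (fun x => decide (x = y)) := by
          have h1 := countP_split (eastHeightsAux 0 u) y
          have h2 := lamU_anti u y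
          simp only [lamU, eastHeights] at h1 h2 ⊢
          omega
        by_cases hyk : y < k
        · rw [if_pos hyk, hd]
        · rw [if_neg hyk]
          symm
          rw [List.countP_eq_zero]
          intro a ha
          have := tL_lt_k u a ha
          simp only [decide_eq_true_eq]
          omega
    · have := eha_sorted (blocks k (lamU u)) 0
      rwa [blocks_eha] at this
    · have := eha_sorted u 0
      rw [List.pairwise_map]
      exact this.imp (by omega)

lemma repl_false_append_inj : ∀ (a a' : ℕ) (s s' : List Bool),
    List.replicate a false ++ true :: s = List.replicate a' false ++ true :: s' →
    a = a' ∧ s = s'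
  | 0, 0, s, s', h => ⟨rfl, by simpa using h⟩
  | 0, a'+1, s, s', h => by simp [List.replicate_succ] at h
  | a+1, 0, s, s', h => by simp [List.replicate_succ] at h
  | a+1, a'+1, s, s', h => by
      rw [List.replicate_succ, List.replicate_succ, List.cons_append, List.cons_append,
        List.cons.injEq] at h
      obtain ⟨h1, h2⟩ := repl_false_append_inj a a' s s' h.2
      exact ⟨by omega, h2⟩

lemma blocks_inj : ∀ (k : ℕ) (L L' : ℕ → ℕ), (∀ i, L (i+1) ≤ L i) → (∀ i, L' (i+1) ≤ L' i) →
    L k = 0 → L' k = 0 → blocks k L = blocks k L' → ∀ i, i ≤ k → L i = L' i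
  | 0, L, L', _, _, hL0, hL'0, _, i, hi => by
      have : i = 0 := by omega
      subst this
      rw [hL0, hL'0]
  | k+1, L, L', ha, ha', hL0, hL'0, heq, i, hi => by
      rw [blocks_succ, blocks_succ, List.cons.injEq] at heq
      have key : L 0 - L 1 = L' 0 - L' 1 ∧
          blocks k (fun i => L (i+1)) = blocks k (fun i => L' (i+1)) := by
        rcases k with _ | k''
        · rw [blocks_zero, blocks_zero, List.append_nil, List.append_nil] at heq
          have := congrArg List.length heq.2
          simp only [List.length_replicate] at this
          exact ⟨this, rfl⟩
        · rw [blocks_succ, blocks_succ] at heq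
          obtain ⟨h1, h2⟩ := repl_false_append_inj _ _ _ _ heq.2
          refine ⟨h1, ?_⟩
          rw [blocks_succ, blocks_succ, h2]
      have ih := blocks_inj k (fun i => L (i+1)) (fun i => L' (i+1))
        (fun i => ha (i+1)) (fun i => ha' (i+1)) hL0 hL'0 key.2
      rcases i with _ | i''
      · have hL1 : L 1 = L' 1 := by simpa using ih 0 (by omega)
        have h2 : L 1 ≤ L 0 := ha 0
        have h3 : L' 1 ≤ L' 0 := ha' 0
        have h4 := key.1
        omega
      · exact ih i'' (by omega)
end CTaux

namespace CTaux
open List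

lemma ct_ext {n : ℕ} {T T' : CatalanTableau n} (hk : T.k = T'.k) (hm : T.m = T'.m)
    (hlam : ∀ i (h : i < T.k) (h' : i < T'.k), T.lam ⟨i, h⟩ = T'.lam ⟨i, h'⟩)
    (hf : ∀ i j (hi : i < T.k) (hj : j < T.m) (hi' : i < T'.k) (hj' : j < T'.m),
      T.f ⟨i, hi⟩ ⟨j, hj⟩ = T'.f ⟨i, hi'⟩ ⟨j, hj'⟩) : T = T' := by
  obtain ⟨k, m, hk0, hkm, lam, lle, lf, lanti, f, fo, co, nb⟩ := T
  obtain ⟨k', m', hk0', hkm', lam', lle', lf', lanti', f', fo', co', nb'⟩ := T'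
  dsimp at hk hm hlam hf
  subst hk hm
  have hl : lam = lam' := by
    funext i
    have := hlam i.val i.isLt i.isLt
    simpa using this
  have hff : f = f' := by
    funext i j
    have := hf i.val j.val i.isLt j.isLt i.isLt j.isLt
    simpa using this
  subst hl hff
  rfl

def lamN {n : ℕ} (T : CatalanTableau n) (i : ℕ) : ℕ :=
  if h : i < T.k then T.lam ⟨i, h⟩ else 0

lemma lamN_anti {n : ℕ} (T : CatalanTableau n) (i : ℕ) : lamN T (i+1) ≤ lamN T i := by
  unfold lamN
  split_ifs with h1 h2 h2
  · exact T.lam_anti ⟨i, h2⟩ ⟨i+1, h1⟩ (by rw [Fin.mk_le_mk]; omega)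
  · exact absurd (by omega : i < T.k) h2
  · exact Nat.zero_le _
  · exact le_rfl

lemma lamN_k {n : ℕ} (T : CatalanTableau n) : lamN T T.k = 0 := dif_neg (lt_irrefl _)

lemma lamN_zero {n : ℕ} (T : CatalanTableau n) : lamN T 0 = T.m := by
  unfold lamN
  rw [dif_pos T.hk]
  exact T.lam_first

lemma profile_blocks {n : ℕ} (T : CatalanTableau n) :
    blocks T.k (lamN T) = true :: T.profile := by
  have h1 : blocks T.k (lamN T) = (List.finRange T.k).flatMap
      (fun i => true :: List.replicate (T.lam i -
        (if h : (i : ℕ) + 1 < T.k then T.lam ⟨(i : ℕ) + 1, h⟩ else 0)) false) := by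
    rw [blocks, ← List.map_coe_finRange_eq_range, List.flatMap_map]
    congr 1
    funext i
    have h2 : lamN T i.val = T.lam i := by rw [lamN, dif_pos i.isLt]
    show true :: List.replicate (lamN T i.val - lamN T (i.val + 1)) false = _
    rw [h2]
    rfl
  have h2 : T.profile = (blocks T.k (lamN T)).tail := by
    rw [h1]; rfl
  obtain ⟨k', hk'⟩ : ∃ k', T.k = k' + 1 := ⟨T.k - 1, by have := T.hk; omega⟩
  rw [h2, hk', blocks_succ]
  rfl

lemma extract {n : ℕ} (T : CatalanTableau n) (u : List Bool) (hprof : T.profile = u) :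
    T.k = u.count true + 1 ∧ T.m = (eastHeights u).length ∧
      ∀ i (h : i < T.k), T.lam ⟨i, h⟩ = lamU u i := by
  have hW : blocks T.k (lamN T) = true :: u := by rw [profile_blocks, hprof]
  have hkeq : T.k = u.count true + 1 := by
    have h := blocks_count_true T.k (lamN T)
    rw [hW] at h
    simp [List.count_cons] at h
    omega
  have hmeq : T.m = (eastHeights u).length := by
    have hcf := blocks_count_false T.k (lamN T) (lamN_anti T)
    rw [hW, lamN_k, lamN_zero] at hcf
    rw [eastHeights, eha_length]
    simp [List.count_cons] at hcf
    omega
  refine ⟨hkeq, hmeq, fun i h => ?_⟩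
  have hbl : blocks T.k (lamN T) = blocks T.k (lamU u) := by
    rw [hW, hkeq]
    exact (blocks_lamU u).symm
  have hinj := blocks_inj T.k (lamN T) (lamU u) (lamN_anti T) (fun i => lamU_anti u i)
    (lamN_k T) (by rw [hkeq]; exact lamU_eq_zero u le_rfl) hbl i (le_of_lt h)
  rw [lamN, dif_pos h] at hinj
  exact hinj

end CTaux

namespace CTaux
open List

lemma forall₂_getElem {r tL : List ℕ} (h : List.Forall₂ (· ≤ ·) r tL) {j : ℕ}
    (hj : j < tL.length) : r[j]'(by rw [h.length_eq]; exact hj) ≤ tL[j] := by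
  obtain ⟨hl, hg⟩ := List.forall₂_iff_get.1 h
  have := hg j (by omega) hj
  simpa [List.get_eq_getElem] using this

lemma pairwise_zip_getElem {tL r : List ℕ} (hp : List.Pairwise pairCond (tL.zip r))
    (hlen : r.length = tL.length) {j j' : ℕ} (hjj' : j < j') (hj' : j' < tL.length) :
    r[j']'(by omega) ≤ tL[j]'(by omega) → r[j']'(by omega) ≤ r[j]'(by omega) := by
  have hzlen : (tL.zip r).length = tL.length := by
    rw [List.length_zip, hlen, min_self]
  have h := List.pairwise_iff_get.1 hp ⟨j, by omega⟩ ⟨j', by omega⟩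
    (by rw [Fin.lt_def]; exact hjj')
  simpa [pairCond, List.get_eq_getElem, List.getElem_zip] using h

def fN {n : ℕ} (T : CatalanTableau n) (i j : ℕ) : Bool :=
  if h : i < T.k ∧ j < T.m then T.f ⟨i, h.1⟩ ⟨j, h.2⟩ else false

def mkT (u : List Bool) (n : ℕ) (hu : u.length = n)
    (r : List ℕ) (hr : List.Forall₂ (· ≤ ·) r (eastHeights u))
    (hp : List.Pairwise pairCond ((eastHeights u).zip r)) : CatalanTableau (n+1) where
  k := u.count true + 1
  m := (eastHeights u).length
  hk := Nat.succ_pos _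
  hkm := by
    rw [eastHeights, eha_length]
    have := length_eq_counts u
    omega
  lam := fun i => lamU u i.val
  lam_le := fun i => lamU_le u i.val
  lam_first := lamU_zero u
  lam_anti := fun i j hij => lamU_anti' u (by exact hij)
  f := fun i j => decide ((i : ℕ) = r[(j : ℕ)]'(by rw [hr.length_eq]; exact j.isLt))
  f_outside := by
    intro i j hj
    simp only [decide_eq_false_iff_not]
    intro hie
    have hj' : (j:ℕ) < (eastHeights u).length - lamU u i.val := hj
    have h2 : ¬ (i.val ≤ (eastHeights u)[(j:ℕ)]'j.isLt) := by
      intro hc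
      have := (lamU_threshold j.isLt).1 hc
      omega
    have h3 := forall₂_getElem hr j.isLt
    rw [← hie] at h3
    exact h2 h3
  col_one := by
    intro j
    have h3 := forall₂_getElem hr j.isLt
    have h4 := tL_lt_k u _ (List.getElem_mem j.isLt)
    refine ⟨⟨r[(j:ℕ)]'(by rw [hr.length_eq]; exact j.isLt), by omega⟩, by simp, ?_⟩
    intro i hi
    simp only [decide_eq_true_eq] at hi
    exact Fin.ext hi
  no_bad := by
    rintro i j hth hf ⟨⟨i', hi'lt, hi'⟩, ⟨j', hjj', hj'⟩⟩
    simp only [decide_eq_true_eq] at hi' hj'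
    have hile : i.val ≤ (eastHeights u)[(j:ℕ)]'j.isLt := (lamU_threshold j.isLt).2 hth
    have hpc := pairwise_zip_getElem hp hr.length_eq (show (j:ℕ) < (j':ℕ) from hjj') j'.isLt
    have hle := hpc (by rw [← hj']; exact hile)
    rw [Fin.lt_def] at hi'lt
    omega

lemma mkT_f_eval (u : List Bool) (n : ℕ) (hu : u.length = n)
    (r : List ℕ) (hr : List.Forall₂ (· ≤ ·) r (eastHeights u))
    (hp : List.Pairwise pairCond ((eastHeights u).zip r)) (i j : ℕ)
    (hik : i < u.count true + 1) (hjm : j < (eastHeights u).length) :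
    fN (mkT u n hu r hr hp) i j =
      decide (i = r[j]'(by rw [hr.length_eq]; exact hjm)) := by
  rw [fN, dif_pos (show i < (mkT u n hu r hr hp).k ∧ j < (mkT u n hu r hr hp).m from
    ⟨hik, hjm⟩)]
  rfl

lemma mkT_profile (u : List Bool) (n : ℕ) (hu : u.length = n)
    (r : List ℕ) (hr : List.Forall₂ (· ≤ ·) r (eastHeights u))
    (hp : List.Pairwise pairCond ((eastHeights u).zip r)) :
    (mkT u n hu r hr hp).profile = u := by
  have h1 := profile_blocks (mkT u n hu r hr hp)
  have h2 : lamN (mkT u n hu r hr hp) = lamU u := by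
    funext i
    rw [lamN]
    split_ifs with h
    · rfl
    · have h' : ¬ i < u.count true + 1 := h
      exact (lamU_eq_zero u (by omega)).symm
  rw [h2] at h1
  have h3 : (mkT u n hu r hr hp).k = u.count true + 1 := rfl
  rw [h3, blocks_lamU u] at h1
  exact (show u = _ by simpa using h1).symm

end CTaux

namespace CTaux
open List

lemma card_tableaux (n : ℕ) (u : List Bool) (hu : u.length = n) :
    Nat.card {r : List ℕ // List.Forall₂ (· ≤ ·) r (eastHeights u) ∧
        List.Pairwise pairCond ((eastHeights u).zip r)} =
      Nat.card {T : CatalanTableau (n + 1) // T.profile = u} := by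
  refine Nat.card_eq_of_bijective
    (fun r => ⟨mkT u n hu r.1 r.2.1 r.2.2, mkT_profile u n hu r.1 r.2.1 r.2.2⟩) ⟨?_, ?_⟩
  · rintro ⟨r, hr, hp⟩ ⟨r', hr', hp'⟩ heq
    have hT : mkT u n hu r hr hp = mkT u n hu r' hr' hp' := congrArg Subtype.val heq
    apply Subtype.ext
    refine List.ext_get (by rw [hr.length_eq, hr'.length_eq]) ?_
    intro j hj hj'
    have hjm : j < (eastHeights u).length := by rw [← hr.length_eq]; exact hj
    have hrk : r[j] < u.count true + 1 :=
      lt_of_le_of_lt (forall₂_getElem hr hjm) (tL_lt_k u _ (List.getElem_mem hjm))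
    have e1 : fN (mkT u n hu r hr hp) (r[j]'hj) j =
        fN (mkT u n hu r' hr' hp') (r[j]'hj) j := by rw [hT]
    rw [mkT_f_eval u n hu r hr hp _ j hrk hjm,
      mkT_f_eval u n hu r' hr' hp' _ j hrk hjm] at e1
    simp only [decide_eq_decide] at e1
    simp only [List.get_eq_getElem]
    exact e1.1 trivial
  · rintro ⟨T, hprof⟩
    obtain ⟨hkeq, hmeq, hlam⟩ := extract T u hprof
    have hlam' : ∀ (i : Fin T.k), T.lam i = lamU u i.val := by
      intro i
      have := hlam i.val i.isLt
      simpa using this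
    classical
    let rv : Fin T.m → Fin T.k := fun j => Fintype.choose _ (T.col_one j)
    have hrv : ∀ j, T.f (rv j) j = true := fun j => Fintype.choose_spec _ (T.col_one j)
    have hrvu : ∀ j i, T.f i j = true → i = rv j :=
      fun j i hi => (T.col_one j).unique hi (hrv j)
    set r : List ℕ := List.ofFn (fun j : Fin T.m => (rv j).val) with hrdef
    have hrlen : r.length = (eastHeights u).length := by
      rw [hrdef, List.length_ofFn, hmeq]
    have hrget : ∀ (j : ℕ) (hj : j < T.m),
        r[j]'(by rw [hrdef, List.length_ofFn]; exact hj) = (rv ⟨j, hj⟩).val := by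
      intro j hj
      simp [hrdef]
    have hbound : ∀ (j : Fin T.m),
        (rv j).val ≤ (eastHeights u)[(j:ℕ)]'(by rw [← hmeq]; exact j.isLt) := by
      intro j
      by_contra hc
      push_neg at hc
      have hout : (j : ℕ) < T.m - T.lam (rv j) := by
        have hth := lamU_threshold (u := u) (i := (rv j).val) (j := (j:ℕ))
          (by rw [← hmeq]; exact j.isLt)
        have h2 : ¬ ((eastHeights u).length - lamU u (rv j).val ≤ (j:ℕ)) := by
          intro hx
          exact absurd (hth.2 hx) (by omega)
        have h3 : T.lam (rv j) = lamU u (rv j).val := hlam' (rv j)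
        rw [← h3] at h2
        omega
      exact absurd (hrv j) (by rw [T.f_outside (rv j) j hout]; simp)
    have hfor : List.Forall₂ (· ≤ ·) r (eastHeights u) := by
      rw [List.forall₂_iff_get]
      refine ⟨hrlen, fun j h1 h2 => ?_⟩
      have hjm : j < T.m := by rw [hrdef, List.length_ofFn] at h1; exact h1
      simp only [List.get_eq_getElem]
      rw [hrget j hjm]
      exact hbound ⟨j, hjm⟩
    have hpw : List.Pairwise pairCond ((eastHeights u).zip r) := by
      rw [List.pairwise_iff_get]
      rintro ⟨j, hjz⟩ ⟨j', hj'z⟩ hlt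
      rw [Fin.lt_def] at hlt
      simp only at hlt
      have hzlen : ((eastHeights u).zip r).length = (eastHeights u).length := by
        rw [List.length_zip, hrlen, min_self]
      have hjm : j < T.m := by rw [hzlen] at hjz; omega
      have hj'm : j' < T.m := by rw [hzlen] at hj'z; omega
      simp only [List.get_eq_getElem, List.getElem_zip]
      intro hle
      rw [hrget j' hj'm] at hle ⊢
      rw [hrget j hjm]
      set i := rv ⟨j', hj'm⟩ with hi
      set i' := rv ⟨j, hjm⟩ with hi'
      rcases le_or_gt i.val i'.val with hc | hc
      · exact hc
      · exfalso
        have hth : T.m - T.lam i ≤ j := by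
          have := (lamU_threshold (u := u) (i := i.val) (j := j)
            (by rw [← hmeq]; exact hjm)).1 hle
          rw [← hlam' i, ← hmeq] at this
          exact this
        have hfij : T.f i ⟨j, hjm⟩ = false := by
          rcases hfb : T.f i ⟨j, hjm⟩ with _ | _
          · rfl
          · exact absurd (congrArg Fin.val (hrvu ⟨j, hjm⟩ i hfb)) (by omega)
        refine T.no_bad i ⟨j, hjm⟩ hth hfij ⟨⟨i', by rw [Fin.lt_def]; exact hc, hrv ⟨j, hjm⟩⟩,
          ⟨⟨j', hj'm⟩, by simpa using hlt, hrv ⟨j', hj'm⟩⟩⟩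
    refine ⟨⟨r, hfor, hpw⟩, ?_⟩
    apply Subtype.ext
    refine (ct_ext ?_ ?_ ?_ ?_).symm
    · exact hkeq
    · exact hmeq
    · intro i h h'
      exact hlam i h
    · intro i j hi hj hi' hj'
      have hiT : i < T.k := hi
      have hjT : j < T.m := hj
      have hik : i < u.count true + 1 := by omega
      have hjm2 : j < (eastHeights u).length := by omega
      have hfn : fN (mkT u n hu r hfor hpw) i j = fN T i j := by
        rw [mkT_f_eval u n hu r hfor hpw i j hik hjm2,
          fN, dif_pos (⟨hiT, hjT⟩ : i < T.k ∧ j < T.m)]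
        rw [hrget j hjT]
        rcases hc : T.f ⟨i, hiT⟩ ⟨j, hjT⟩ with _ | _
        · simp only [decide_eq_false_iff_not]
          intro hie
          have : (⟨i, hiT⟩ : Fin T.k) = rv ⟨j, hjT⟩ := Fin.ext hie
          rw [this] at hc
          rw [hrv ⟨j, hjT⟩] at hc
          exact Bool.noConfusion hc
        · have := hrvu ⟨j, hjT⟩ ⟨i, hiT⟩ hc
          simp [← congrArg Fin.val this]
      rw [fN, dif_pos (show i < (mkT u n hu r hfor hpw).k ∧
          j < (mkT u n hu r hfor hpw).m from ⟨hik, hjm2⟩),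
        fN, dif_pos (⟨hiT, hjT⟩ : i < T.k ∧ j < T.m)] at hfn
      exact hfn.symm

end CTaux

/-- For every integer `n ≥ 1` and every word `u` of length `n` over
`{a, b}`, the number of Catalan tableaux of index `n + 1` whose profile is `u`
equals the number of lattice paths `η` (with unit north and east steps) that are
weakly below the path `ω_u`. -/
theorem card_catalanTableau_profile_eq_card_paths_below
    (n : ℕ) (hn : 1 ≤ n) (u : List Bool) (hu : u.length = n) :
    Nat.card {T : CatalanTableau (n + 1) // T.profile = u} =
      Nat.card {η : List Bool // weaklyBelow u η} := by
  rw [← CTaux.card_tableaux n u hu,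
    ← CTaux.card_middle (eastHeights u) (CTaux.eha_sorted u 0),
    ← CTaux.card_paths u]
end
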